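/- arXiv:math/9911152 — 10 statements merged into one kernel-verified Lean document; each statement's English description precedes it below -/
import Mathlib

section
/- Let A be a positive semidefinite matrix in M_n(ℂ) and suppose y ∈ ℂ^n satisfies Ay = p, where p = (1,...,1). Then I(A) = ⟨Ay, y⟩^{-1} = (Σ_i y_i)^{-1}. -/
open Matrix ComplexOrder

/-- The minimal Hadamard index `I(A)`. -/
noncomputable def minIdx {k : Type*} [Fintype k] (A : Matrix k k ℂ) : ℝ :=
  sSup {t : ℝ | 0 ≤ t ∧ (A - (t : ℂ) • (Matrix.of fun _ _ => (1 : ℂ))).PosSemidef}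

theorem minIdx_eq_of_mulVec_eq_one {n : ℕ} (A : Matrix (Fin n) (Fin n) ℂ)
    (hA : A.PosSemidef) (y : Fin n → ℂ) (hy : A.mulVec y = fun _ => 1) :
    (minIdx A : ℂ) = (star y ⬝ᵥ A.mulVec y)⁻¹ ∧ (minIdx A : ℂ) = (∑ i, y i)⁻¹ := by
  classical
  set P : Matrix (Fin n) (Fin n) ℂ := Matrix.of fun _ _ => (1 : ℂ) with hP
  set c : ℂ := star y ⬝ᵥ A.mulVec y with hc
  have hw : ∀ x : Fin n → ℂ, star y ⬝ᵥ A.mulVec x = ∑ i, x i := by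
    intro x
    rw [dotProduct_mulVec, show A = Aᴴ from hA.1.symm, ← star_mulVec, hy]
    simp [dotProduct]
  have hsum : ∑ i, y i = c := (hw y).symm
  have hw' : ∀ x : Fin n → ℂ, star x ⬝ᵥ A.mulVec y = starRingEnd ℂ (∑ i, x i) := by
    intro x
    rw [hy]
    simp [dotProduct, map_sum, Complex.star_def]
  have hPq : ∀ x : Fin n → ℂ, star x ⬝ᵥ P.mulVec x
      = starRingEnd ℂ (∑ i, x i) * ∑ i, x i := by
    intro x
    simp only [hP, mulVec, dotProduct, of_apply, mul_one, one_mul, Pi.star_apply,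
      Complex.star_def]
    rw [← Finset.sum_mul, ← map_sum]
  have hc0 : 0 ≤ c := hA.dotProduct_mulVec_nonneg y
  obtain ⟨hcre, hcim⟩ := Complex.nonneg_iff.mp hc0
  set s : ℝ := c.re with hs
  have hcs : c = (s : ℂ) := by
    apply Complex.ext <;> simp [hs, ← hcim]
  rcases Nat.eq_zero_or_pos n with hn | hn
  · subst hn
    have hPSD : ∀ t : ℝ, 0 ≤ t → (A - (t : ℂ) • P).PosSemidef := by
      intro t _
      refine posSemidef_iff_dotProduct_mulVec.mpr ⟨?_, ?_⟩
      · ext i j; exact i.elim0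
      · intro x; simp [dotProduct]
    have hset : {t : ℝ | 0 ≤ t ∧ (A - (t : ℂ) • P).PosSemidef} = Set.Ici 0 := by
      ext t; simp only [Set.mem_setOf_eq, Set.mem_Ici]
      exact ⟨fun h => h.1, fun h => ⟨h, hPSD t h⟩⟩
    have hmin : minIdx A = 0 := by
      rw [minIdx, ← hP, hset]
      exact Real.sSup_of_not_bddAbove (by simpa using not_bddAbove_Ici (0:ℝ))
    have hc' : c = 0 := by simp [hc, dotProduct]
    rw [hmin]
    simp [hc']
  have hcne : c ≠ 0 := by
    intro h
    have := (hA.dotProduct_mulVec_zero_iff y).mp (by rw [← hc, h])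
    rw [hy] at this
    exact one_ne_zero (congrFun this ⟨0, hn⟩)
  have hspos : 0 < s := lt_of_le_of_ne hcre (by intro h; exact hcne (by rw [hcs, ← h]; simp))
  have hspos' : (0:ℂ) < (s:ℂ) := by exact_mod_cast hspos
  have hsne : (s : ℂ) ≠ 0 := by exact_mod_cast hspos.ne'
  -- Cauchy–Schwarz
  have cauchy : ∀ x : Fin n → ℂ,
      starRingEnd ℂ (∑ i, x i) * ∑ i, x i ≤ (s : ℂ) * (star x ⬝ᵥ A.mulVec x) := by
    intro x
    set w : ℂ := ∑ i, x i with hwdef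
    have h0 := hA.dotProduct_mulVec_nonneg ((s : ℂ) • x - w • y)
    have hexp : star ((s : ℂ) • x - w • y) ⬝ᵥ A.mulVec ((s : ℂ) • x - w • y)
        = (s : ℂ) * ((s : ℂ) * (star x ⬝ᵥ A.mulVec x) - starRingEnd ℂ w * w) := by
      rw [mulVec_sub, mulVec_smul, mulVec_smul, star_sub, star_smul, star_smul,
        sub_dotProduct, dotProduct_sub, dotProduct_sub]
      simp only [smul_dotProduct, dotProduct_smul, smul_eq_mul, Complex.star_def,
        Complex.conj_ofReal]
      rw [hw x, hw y, hw' x, hsum, hcs, ← hwdef]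
      ring
    rw [hexp] at h0
    have h1 : (0:ℂ) ≤ (s : ℂ) * (star x ⬝ᵥ A.mulVec x) - starRingEnd ℂ w * w := by
      have h2 := mul_nonneg (show (0:ℂ) ≤ ((s:ℂ))⁻¹ by
        rw [← Complex.ofReal_inv]; exact_mod_cast (inv_nonneg.mpr hspos.le)) h0
      rwa [inv_mul_cancel_left₀ hsne] at h2
    exact sub_nonneg.mp h1
  have hPherm : P.IsHermitian := by
    ext i j; simp [hP, conjTranspose_apply]
  -- s⁻¹ belongs to the set
  have hmem : 0 ≤ s⁻¹ ∧ (A - ((s⁻¹ : ℝ) : ℂ) • P).PosSemidef := by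
    refine ⟨inv_nonneg.mpr hspos.le, posSemidef_iff_dotProduct_mulVec.mpr ⟨?_, ?_⟩⟩
    · show (A - ((s⁻¹ : ℝ) : ℂ) • P)ᴴ = _
      rw [conjTranspose_sub, conjTranspose_smul, hA.1, hPherm]
      congr 1
      simp [Complex.star_def, Complex.conj_ofReal]
    · intro x
      rw [sub_mulVec, dotProduct_sub, smul_mulVec, dotProduct_smul, smul_eq_mul, hPq x]
      rw [sub_nonneg]
      calc ((s⁻¹ : ℝ) : ℂ) * (starRingEnd ℂ (∑ i, x i) * ∑ i, x i)
          ≤ ((s⁻¹ : ℝ) : ℂ) * ((s : ℂ) * (star x ⬝ᵥ A.mulVec x)) := by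
            apply mul_le_mul_of_nonneg_left (cauchy x)
            positivity
        _ = star x ⬝ᵥ A.mulVec x := by
            push_cast
            rw [inv_mul_cancel_left₀ hsne]
  -- upper bound
  have hub : ∀ t ∈ {t : ℝ | 0 ≤ t ∧ (A - (t : ℂ) • P).PosSemidef}, t ≤ s⁻¹ := by
    rintro t ⟨ht0, hpsd⟩
    have h0 := hpsd.dotProduct_mulVec_nonneg y
    rw [sub_mulVec, dotProduct_sub, smul_mulVec, dotProduct_smul, smul_eq_mul, hPq y,
      hw y, hsum, hcs, Complex.conj_ofReal] at h0
    have hre : (0:ℝ) ≤ s - t * (s * s) := by exact_mod_cast h0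
    rw [inv_eq_one_div, le_div_iff₀ hspos]
    nlinarith [hre, hspos]
  have hmin : minIdx A = s⁻¹ := by
    rw [minIdx, ← hP]
    exact IsGreatest.csSup_eq ⟨hmem, hub⟩
  have hys : (∑ i, y i) = (s : ℂ) := hsum.trans hcs
  rw [hmin, hcs, hys]
  norm_num
end

section
/- For A positive semidefinite in M_n(ℂ), I(A) = min{⟨Az, z⟩ : z ∈ ℂ^n, Σ_{i=1}^n z_i = 1}. -/
open Matrix ComplexOrder

private lemma exists_min_vec {n : ℕ} (hn : 0 < n) {A : Matrix (Fin n) (Fin n) ℂ}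
    (hA : A.PosSemidef) :
    ∃ (z : Fin n → ℂ) (c : ℝ), 0 ≤ c ∧ (∑ i, z i) = 1 ∧
      A *ᵥ z = (c : ℂ) • (fun _ => (1 : ℂ)) := by
  classical
  set e : Fin n → ℂ := fun _ => 1 with he
  by_cases hmem : e ∈ LinearMap.range A.mulVecLin
  · obtain ⟨y, hy⟩ := hmem
    have hy' : A *ᵥ y = e := hy
    set s : ℂ := ∑ i, y i with hs
    have hQ : star y ⬝ᵥ A *ᵥ y = starRingEnd ℂ s := by
      rw [hy']
      simp [he, dotProduct, hs, map_sum]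
    have hpos : (0 : ℂ) ≤ starRingEnd ℂ s := hQ ▸ hA.dotProduct_mulVec_nonneg y
    have hre : 0 ≤ s.re ∧ s.im = 0 := by
      rw [Complex.le_def] at hpos
      constructor
      · simpa using hpos.1
      · have := hpos.2; simp at this; linarith
    have hs_real : s = (s.re : ℂ) := by
      apply Complex.ext <;> simp [hre.2]
    rcases eq_or_lt_of_le hre.1 with h0 | h0
    · exfalso
      have hs0 : s = 0 := by rw [hs_real, ← h0]; simp
      have : A *ᵥ y = 0 := by
        rw [← hA.dotProduct_mulVec_zero_iff, hQ, hs0, map_zero]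
      rw [hy'] at this
      have := congrFun this ⟨0, hn⟩
      simp [he] at this
    · refine ⟨s⁻¹ • y, (s.re)⁻¹, by positivity, ?_, ?_⟩
      · have hsne : s ≠ 0 := by
          rw [hs_real]; exact_mod_cast (by positivity : ((s.re:ℝ):ℂ) ≠ 0)
        have : (∑ x, (s⁻¹ • y) x) = s⁻¹ * ∑ i, y i := by
          simp [Finset.mul_sum]
        rw [this, ← hs, inv_mul_cancel₀ hsne]
      · rw [mulVec_smul, hy']
        funext i
        simp only [Pi.smul_apply, he, smul_eq_mul, mul_one]
        rw [hs_real, Complex.ofReal_inv]; simp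
  · have hfree : Module.Free ℂ ((Fin n → ℂ) ⧸ LinearMap.range A.mulVecLin) :=
      Module.Free.of_divisionRing _ _
    obtain ⟨f, hfe, hker⟩ :=
      (LinearMap.range A.mulVecLin).exists_dual_map_eq_bot_of_notMem hmem inferInstance
    set u : Fin n → ℂ := fun i => f (fun j => if i = j then 1 else 0) with hu
    have hf_eq : ∀ w : Fin n → ℂ, f w = w ⬝ᵥ u := by
      intro w
      conv_lhs => rw [pi_eq_sum_univ w]
      rw [map_sum]
      simp [dotProduct, hu]
    have hAu : ∀ x, (A *ᵥ x) ⬝ᵥ u = 0 := by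
      intro x
      rw [← hf_eq]
      have : f (A *ᵥ x) ∈ (LinearMap.range A.mulVecLin).map f :=
        Submodule.mem_map_of_mem ⟨x, rfl⟩
      rw [hker] at this
      simpa using this
    have hvecMul : u ᵥ* A = 0 := by
      funext j
      have := hAu (fun k => if k = j then 1 else 0)
      rw [dotProduct_comm, dotProduct_mulVec] at this
      simpa [dotProduct] using this
    have hAv : A *ᵥ star u = 0 := by
      have : star (A *ᵥ star u) = 0 := by
        rw [star_mulVec, star_star, hA.1]
        exact hvecMul
      simpa using this
    have hsum : (∑ i, (star u) i) = starRingEnd ℂ (f e) := by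
      rw [hf_eq]
      simp [he, dotProduct, map_sum]
    have hsne : (∑ i, (star u) i) ≠ 0 := by
      rw [hsum]
      simpa using hfe
    refine ⟨(∑ i, (star u) i)⁻¹ • star u, 0, le_refl _, ?_, ?_⟩
    · have : (∑ x, ((∑ i, (star u) i)⁻¹ • star u) x)
          = (∑ i, (star u) i)⁻¹ * ∑ i, (star u) i := by
        simp [Finset.mul_sum]
      rw [this, inv_mul_cancel₀ hsne]
    · rw [mulVec_smul, hAv]
      funext i; simp

private lemma star_dot_ones {n : ℕ} (x : Fin n → ℂ) :
    star x ⬝ᵥ (fun _ => (1 : ℂ)) = starRingEnd ℂ (∑ i, x i) := by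
  rw [map_sum]; simp [dotProduct]

private lemma quad_sub {n : ℕ} (A : Matrix (Fin n) (Fin n) ℂ) (c : ℝ) (x : Fin n → ℂ) :
    star x ⬝ᵥ (A - (c : ℂ) • (Matrix.of fun _ _ => (1 : ℂ))) *ᵥ x
      = star x ⬝ᵥ A *ᵥ x
        - (c : ℂ) * ((∑ i, x i) * starRingEnd ℂ (∑ i, x i)) := by
  have hPx : (Matrix.of fun _ _ => (1 : ℂ) : Matrix (Fin n) (Fin n) ℂ) *ᵥ x
      = (∑ i, x i) • (fun _ => (1 : ℂ)) := by
    funext i; simp [mulVec, dotProduct]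
  rw [sub_mulVec, dotProduct_sub, smul_mulVec, hPx, dotProduct_smul,
    dotProduct_smul, star_dot_ones]
  simp only [smul_eq_mul]

private lemma quad_identity {n : ℕ} {A : Matrix (Fin n) (Fin n) ℂ}
    (hA : A.IsHermitian) {z : Fin n → ℂ} {c : ℝ}
    (hz1 : (∑ i, z i) = 1) (hAz : A *ᵥ z = (c : ℂ) • (fun _ => (1 : ℂ)))
    (x : Fin n → ℂ) :
    star x ⬝ᵥ (A - (c : ℂ) • (Matrix.of fun _ _ => (1 : ℂ))) *ᵥ x
      = star (x - (∑ i, x i) • z) ⬝ᵥ A *ᵥ (x - (∑ i, x i) • z) := by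
  set σ : ℂ := ∑ i, x i with hσ
  have hsz : star z ⬝ᵥ (fun _ => (1 : ℂ)) = 1 := by
    rw [star_dot_ones, hz1]; simp
  have hvm : star z ᵥ* A = (c : ℂ) • (fun _ => (1 : ℂ)) := by
    rw [← hA.eq, ← star_mulVec, hAz]
    funext i
    simp [Complex.conj_ofReal]
  have h1 : A *ᵥ (x - σ • z) = A *ᵥ x - (σ * (c : ℂ)) • (fun _ => (1 : ℂ)) := by
    rw [mulVec_sub, mulVec_smul, hAz, smul_smul]
  have h2 : star (x - σ • z) = star x - starRingEnd ℂ σ • star z := by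
    rw [star_sub, star_smul]; rfl
  have h3 : star z ⬝ᵥ A *ᵥ x = (c : ℂ) * σ := by
    rw [dotProduct_mulVec, hvm, smul_dotProduct]
    simp only [smul_eq_mul]
    congr 1
    simp [dotProduct, hσ]
  rw [quad_sub, h1, h2, sub_dotProduct, dotProduct_sub, dotProduct_sub,
    smul_dotProduct, smul_dotProduct, dotProduct_smul, dotProduct_smul,
    star_dot_ones, hsz, h3, ← hσ]
  simp only [smul_eq_mul]
  ring

private lemma sub_smul_posSemidef {n : ℕ} {A : Matrix (Fin n) (Fin n) ℂ}
    (hA : A.PosSemidef) {z : Fin n → ℂ} {c : ℝ}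
    (hz1 : (∑ i, z i) = 1) (hAz : A *ᵥ z = (c : ℂ) • (fun _ => (1 : ℂ))) :
    (A - (c : ℂ) • (Matrix.of fun _ _ => (1 : ℂ))).PosSemidef := by
  refine PosSemidef.of_dotProduct_mulVec_nonneg ?_ ?_
  · show _ = _
    rw [conjTranspose_sub, conjTranspose_smul, hA.1.eq]
    congr 1
    rw [Complex.star_def, Complex.conj_ofReal]
    congr 1
    ext i j; simp [conjTranspose_apply]
  · intro x
    rw [quad_identity hA.1 hz1 hAz x]
    exact hA.dotProduct_mulVec_nonneg _

/-- `I(A) = min { ⟨Az, z⟩ : ∑ z_i = 1 }` (the minimum is attained). -/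
theorem minIdx_eq_min_quadratic_form {n : ℕ} (A : Matrix (Fin n) (Fin n) ℂ)
    (hn : 0 < n) (hA : A.PosSemidef) :
    minIdx A =
      sInf {r : ℝ | ∃ z : Fin n → ℂ, (∑ i, z i) = 1 ∧ star z ⬝ᵥ A.mulVec z = (r : ℂ)} ∧
    ∃ z : Fin n → ℂ, (∑ i, z i) = 1 ∧ star z ⬝ᵥ A.mulVec z = (minIdx A : ℂ) := by
  obtain ⟨z, c, hc, hz1, hAz⟩ := exists_min_vec hn hA
  have hM := sub_smul_posSemidef hA hz1 hAz
  have hQz : star z ⬝ᵥ A *ᵥ z = (c : ℂ) := by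
    rw [hAz, dotProduct_smul, star_dot_ones, hz1]
    simp
  have hcS : c ∈ {t : ℝ | 0 ≤ t ∧
      (A - (t : ℂ) • (Matrix.of fun _ _ => (1 : ℂ))).PosSemidef} := ⟨hc, hM⟩
  have hSb : ∀ t ∈ {t : ℝ | 0 ≤ t ∧
      (A - (t : ℂ) • (Matrix.of fun _ _ => (1 : ℂ))).PosSemidef}, t ≤ c := by
    intro t ht
    have h0 := ht.2.dotProduct_mulVec_nonneg z
    rw [quad_sub, hQz, hz1] at h0
    have h0' : (0 : ℂ) ≤ (((c - t : ℝ)) : ℂ) := by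
      convert h0 using 1
      push_cast
      ring_nf
      simp
    rw [Complex.zero_le_real] at h0'
    linarith
  have hsup : minIdx A = c := by
    unfold minIdx
    exact le_antisymm (csSup_le ⟨c, hcS⟩ hSb) (le_csSup ⟨c, fun t ht => hSb t ht⟩ hcS)
  have hcR : c ∈ {r : ℝ | ∃ z' : Fin n → ℂ, (∑ i, z' i) = 1 ∧
      star z' ⬝ᵥ A.mulVec z' = (r : ℂ)} := ⟨z, hz1, hQz⟩
  have hRb : ∀ r ∈ {r : ℝ | ∃ z' : Fin n → ℂ, (∑ i, z' i) = 1 ∧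
      star z' ⬝ᵥ A.mulVec z' = (r : ℂ)}, c ≤ r := by
    rintro r ⟨z', hz'1, hz'⟩
    have h0 := hM.dotProduct_mulVec_nonneg z'
    rw [quad_sub, hz'1] at h0
    rw [show A.mulVec z' = A *ᵥ z' from rfl] at hz'
    rw [hz'] at h0
    have h0' : (0 : ℂ) ≤ (((r - c : ℝ)) : ℂ) := by
      convert h0 using 1
      push_cast
      ring_nf
      simp
    rw [Complex.zero_le_real] at h0'
    linarith
  refine ⟨?_, z, hz1, by rw [hsup]; exact hQz⟩
  rw [hsup]
  exact (le_antisymm (le_csInf ⟨c, hcR⟩ hRb) (csInf_le ⟨c, hRb⟩ hcR))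
end

section
/- If A is a positive semidefinite n×n matrix and B is a positive semidefinite m×m matrix, then the minimal Hadamard index of the Kronecker product satisfies I(A ⊗ B) = I(A) · I(B). -/
open Matrix ComplexOrder Kronecker

namespace MinIdxAux

variable {k : Type*} [Fintype k]

noncomputable def Jm (k : Type*) : Matrix k k ℂ := Matrix.of fun _ _ => (1 : ℂ)

lemma qJ (x : k → ℂ) :
    star x ⬝ᵥ (Jm k) *ᵥ x = (Complex.normSq (∑ i, x i) : ℂ) := by
  simp only [Jm, dotProduct, mulVec, Matrix.of_apply, one_mul, Pi.star_apply, Complex.star_def]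
  rw [← Finset.sum_mul, ← map_sum, Complex.normSq_eq_conj_mul_self]

lemma dp_prod {n m : Type*} [Fintype n] [Fintype m] (f u : n → ℂ) (g v : m → ℂ) :
    (fun p : n × m => f p.1 * g p.2) ⬝ᵥ (fun p => u p.1 * v p.2) = (f ⬝ᵥ u) * (g ⬝ᵥ v) := by
  simp only [dotProduct, Fintype.sum_prod_type]
  rw [Finset.sum_mul_sum]
  exact Finset.sum_congr rfl fun i _ => Finset.sum_congr rfl fun j _ => by ring

/-- the set in the definition of minIdx -/
def S (A : Matrix k k ℂ) : Set ℝ :=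
  {t : ℝ | 0 ≤ t ∧ (A - (t : ℂ) • (Matrix.of fun _ _ => (1 : ℂ))).PosSemidef}

lemma minIdx_eq (A : Matrix k k ℂ) : minIdx A = sSup (S A) := rfl

lemma zero_mem_S {A : Matrix k k ℂ} (hA : A.PosSemidef) : (0 : ℝ) ∈ S A := by
  refine ⟨le_refl _, ?_⟩
  simpa using hA

lemma quad_re_nonneg {A : Matrix k k ℂ} (hA : A.PosSemidef) (x : k → ℂ) :
    0 ≤ (star x ⬝ᵥ A *ᵥ x).re :=
  (Complex.nonneg_iff.mp (hA.dotProduct_mulVec_nonneg x)).1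

lemma quad_im_zero {A : Matrix k k ℂ} (hA : A.PosSemidef) (x : k → ℂ) :
    (star x ⬝ᵥ A *ᵥ x).im = 0 :=
  ((Complex.nonneg_iff.mp (hA.dotProduct_mulVec_nonneg x)).2).symm

lemma quad_sub (A : Matrix k k ℂ) (t : ℝ) (x : k → ℂ) :
    star x ⬝ᵥ (A - (t : ℂ) • Jm k) *ᵥ x
      = star x ⬝ᵥ A *ᵥ x - ((t * Complex.normSq (∑ i, x i) : ℝ) : ℂ) := by
  rw [sub_mulVec, dotProduct_sub, smul_mulVec, dotProduct_smul, qJ, smul_eq_mul]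
  push_cast
  ring

lemma char {A : Matrix k k ℂ} (hA : A.PosSemidef) (t : ℝ) :
    (A - (t : ℂ) • (Matrix.of fun _ _ => (1 : ℂ))).PosSemidef
      ↔ ∀ x : k → ℂ, t * Complex.normSq (∑ i, x i) ≤ (star x ⬝ᵥ A *ᵥ x).re := by
  have hJ : (Matrix.of fun _ _ => (1 : ℂ)) = Jm k := rfl
  rw [hJ]
  constructor
  · intro h x
    have h0 := h.dotProduct_mulVec_nonneg x
    rw [quad_sub] at h0
    have := (Complex.nonneg_iff.mp h0).1
    simpa [Complex.sub_re] using this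
  · intro h
    apply PosSemidef.of_dotProduct_mulVec_nonneg
    · exact hA.1.sub (by
        ext i j
        simp [Jm, conjTranspose_apply])
    · intro x
      rw [quad_sub]
      rw [Complex.nonneg_iff]
      constructor
      · simpa [Complex.sub_re] using h x
      · simp [Complex.sub_im, quad_im_zero hA x]

lemma bddAbove_S [Nonempty k] {A : Matrix k k ℂ} (hA : A.PosSemidef) : BddAbove (S A) := by
  classical
  obtain ⟨i₀⟩ := (inferInstance : Nonempty k)
  refine ⟨(star (Pi.single i₀ 1 : k → ℂ) ⬝ᵥ A *ᵥ (Pi.single i₀ 1)).re, ?_⟩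
  intro t ht
  have := (char hA t).mp ht.2 (Pi.single i₀ 1)
  simpa [Finset.sum_pi_single] using this

lemma minIdx_nonneg [Nonempty k] {A : Matrix k k ℂ} (hA : A.PosSemidef) : 0 ≤ minIdx A :=
  le_csSup (bddAbove_S hA) (zero_mem_S hA)

/-- the sup satisfies the defining inequalities -/
lemma sup_mem_char [Nonempty k] {A : Matrix k k ℂ} (hA : A.PosSemidef) (x : k → ℂ) :
    minIdx A * Complex.normSq (∑ i, x i) ≤ (star x ⬝ᵥ A *ᵥ x).re := by
  rcases (Complex.normSq_nonneg (∑ i, x i)).lt_or_eq with hpos | h0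
  · have h : minIdx A ≤ (star x ⬝ᵥ A *ᵥ x).re / Complex.normSq (∑ i, x i) := by
      apply csSup_le ⟨0, zero_mem_S hA⟩
      intro t ht
      rw [le_div_iff₀ hpos]
      exact (char hA t).mp ht.2 x
    rw [← div_mul_cancel₀ ((star x ⬝ᵥ A *ᵥ x).re) (ne_of_gt hpos)]
    exact mul_le_mul_of_nonneg_right h (le_of_lt hpos)
  · rw [← h0, mul_zero]
    exact quad_re_nonneg hA x

lemma sup_mem_S [Nonempty k] {A : Matrix k k ℂ} (hA : A.PosSemidef) : minIdx A ∈ S A :=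
  ⟨minIdx_nonneg hA, (char hA _).mpr (sup_mem_char hA)⟩

lemma conjTranspose_kron {n m : Type*} (P : Matrix n n ℂ) (Q : Matrix m m ℂ) :
    (P ⊗ₖ Q)ᴴ = Pᴴ ⊗ₖ Qᴴ := by
  ext ⟨i, j⟩ ⟨a, b⟩
  simp [conjTranspose_apply, kroneckerMap_apply, mul_comm]

lemma kron_posSemidef {n m : Type*} [Fintype n] [Fintype m] [DecidableEq n] [DecidableEq m]
    {P : Matrix n n ℂ} {Q : Matrix m m ℂ}
    (hP : P.PosSemidef) (hQ : Q.PosSemidef) : (P ⊗ₖ Q).PosSemidef := by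
  exact hP.kronecker hQ

lemma smulJ_posSemidef {a : ℝ} (ha : 0 ≤ a) : ((a : ℂ) • Jm k).PosSemidef := by
  apply PosSemidef.of_dotProduct_mulVec_nonneg
  · ext i j
    simp [Jm, conjTranspose_apply]
  · intro x
    rw [smul_mulVec, dotProduct_smul, qJ, smul_eq_mul, ← Complex.ofReal_mul,
      Complex.nonneg_iff]
    constructor
    · simpa using mul_nonneg ha (Complex.normSq_nonneg _)
    · simp

lemma psd_add {P Q : Matrix k k ℂ} (hP : P.PosSemidef) (hQ : Q.PosSemidef) :
    (P + Q).PosSemidef := by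
  refine PosSemidef.of_dotProduct_mulVec_nonneg (hP.1.add hQ.1) fun x => ?_
  rw [add_mulVec, dotProduct_add]
  exact add_nonneg (hP.dotProduct_mulVec_nonneg x) (hQ.dotProduct_mulVec_nonneg x)

lemma minIdx_of_isEmpty [IsEmpty k] (A : Matrix k k ℂ) : minIdx A = 0 := by
  have hS : S A = {t : ℝ | 0 ≤ t} := by
    ext t
    simp only [S, Set.mem_setOf_eq, and_iff_left_iff_imp]
    intro _
    exact PosSemidef.of_dotProduct_mulVec_nonneg (by ext i j; exact isEmptyElim i) fun x => by simp [dotProduct]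
  rw [minIdx_eq, hS]
  apply Real.sSup_of_not_bddAbove
  rintro ⟨ub, hub⟩
  have h1 : max ub 0 + 1 ∈ {t : ℝ | 0 ≤ t} :=
    le_trans (le_max_right ub 0) (le_add_of_nonneg_right zero_le_one)
  have h2 : ub < max ub 0 + 1 := lt_of_le_of_lt (le_max_left ub 0) (lt_add_one _)
  exact absurd (hub h1) (not_le.mpr h2)

end MinIdxAux

open MinIdxAux

theorem minIdx_kronecker {n m : ℕ} (A : Matrix (Fin n) (Fin n) ℂ)
    (B : Matrix (Fin m) (Fin m) ℂ) (hA : A.PosSemidef) (hB : B.PosSemidef) :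
    minIdx (A ⊗ₖ B) = minIdx A * minIdx B := by
  rcases Nat.eq_zero_or_pos n with hn | hn
  · subst hn
    rw [minIdx_of_isEmpty, minIdx_of_isEmpty A, zero_mul]
  rcases Nat.eq_zero_or_pos m with hm | hm
  · subst hm
    rw [minIdx_of_isEmpty, minIdx_of_isEmpty B, mul_zero]
  have : Nonempty (Fin n) := ⟨⟨0, hn⟩⟩
  have : Nonempty (Fin m) := ⟨⟨0, hm⟩⟩
  have hAB : (A ⊗ₖ B).PosSemidef := kron_posSemidef hA hB
  have ha : 0 ≤ minIdx A := minIdx_nonneg hA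
  have hb : 0 ≤ minIdx B := minIdx_nonneg hB
  -- key: quadratic form of product vectors
  have key : ∀ (x : Fin n → ℂ) (y : Fin m → ℂ),
      minIdx (A ⊗ₖ B) * (Complex.normSq (∑ i, x i) * Complex.normSq (∑ j, y j))
        ≤ (star x ⬝ᵥ A *ᵥ x).re * (star y ⬝ᵥ B *ᵥ y).re := by
    intro x y
    have h := sup_mem_char hAB (fun p : Fin n × Fin m => x p.1 * y p.2)
    have hsum : (∑ p : Fin n × Fin m, x p.1 * y p.2) = (∑ i, x i) * (∑ j, y j) := by
      rw [Fintype.sum_prod_type, ← Finset.sum_mul_sum]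
    have hstar : (star fun p : Fin n × Fin m => x p.1 * y p.2)
        = fun p : Fin n × Fin m => star x p.1 * star y p.2 := by
      funext p
      simp [mul_comm]
    have hmv : (A ⊗ₖ B) *ᵥ (fun p : Fin n × Fin m => x p.1 * y p.2)
        = fun p : Fin n × Fin m => (A *ᵥ x) p.1 * (B *ᵥ y) p.2 := by
      funext p
      exact dp_prod (A p.1) (x) (B p.2) (y)
    have hq : star (fun p : Fin n × Fin m => x p.1 * y p.2)
          ⬝ᵥ (A ⊗ₖ B) *ᵥ (fun p : Fin n × Fin m => x p.1 * y p.2)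
        = (star x ⬝ᵥ A *ᵥ x) * (star y ⬝ᵥ B *ᵥ y) := by
      rw [hmv, hstar]
      exact dp_prod (star x) (A *ᵥ x) (star y) (B *ᵥ y)
    rw [hq, hsum, Complex.normSq_mul] at h
    have hre : ((star x ⬝ᵥ A *ᵥ x) * (star y ⬝ᵥ B *ᵥ y)).re
        = (star x ⬝ᵥ A *ᵥ x).re * (star y ⬝ᵥ B *ᵥ y).re := by
      rw [Complex.mul_re, quad_im_zero hA x, quad_im_zero hB y, mul_zero, sub_zero]
    rw [hre] at h
    exact h
  apply le_antisymm
  · -- minIdx (A ⊗ₖ B) ≤ minIdx A * minIdx B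
    have step1 : ∀ y : Fin m → ℂ,
        minIdx (A ⊗ₖ B) * Complex.normSq (∑ j, y j)
          ≤ minIdx A * (star y ⬝ᵥ B *ᵥ y).re := by
      intro y
      have hr0 : 0 ≤ (star y ⬝ᵥ B *ᵥ y).re := quad_re_nonneg hB y
      rcases le_or_gt (minIdx (A ⊗ₖ B) * Complex.normSq (∑ j, y j)) 0 with ht0 | ht0
      · exact ht0.trans (mul_nonneg ha hr0)
      · have hrpos : 0 < (star y ⬝ᵥ B *ᵥ y).re := by
          rcases hr0.lt_or_eq with h | h
          · exact h
          · exfalso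
            have hk := key (Pi.single ⟨0, hn⟩ 1) y
            rw [← h, mul_zero] at hk
            simp [Finset.sum_pi_single'] at hk
            exact absurd hk (not_le.mpr ht0)
        have hmem : (minIdx (A ⊗ₖ B) * Complex.normSq (∑ j, y j))
            / (star y ⬝ᵥ B *ᵥ y).re ∈ S A := by
          refine ⟨le_of_lt (div_pos ht0 hrpos), (char hA _).mpr fun x => ?_⟩
          rw [div_mul_eq_mul_div, div_le_iff₀ hrpos]
          calc minIdx (A ⊗ₖ B) * Complex.normSq (∑ j, y j) * Complex.normSq (∑ i, x i)
              = minIdx (A ⊗ₖ B)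
                  * (Complex.normSq (∑ i, x i) * Complex.normSq (∑ j, y j)) := by ring
            _ ≤ (star x ⬝ᵥ A *ᵥ x).re * (star y ⬝ᵥ B *ᵥ y).re := key x y
        have h2 := le_csSup (bddAbove_S hA) hmem
        rw [div_le_iff₀ hrpos] at h2
        exact h2
    have hc : 0 ≤ minIdx (A ⊗ₖ B) := minIdx_nonneg hAB
    rcases hc.lt_or_eq with hcpos | h0
    · have hapos : 0 < minIdx A := by
        rcases ha.lt_or_eq with h | h
        · exact h
        · exfalso
          have hk := step1 (Pi.single ⟨0, hm⟩ 1)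
          rw [← h, zero_mul] at hk
          simp [Finset.sum_pi_single'] at hk
          exact absurd hk (not_le.mpr hcpos)
      have hmem : minIdx (A ⊗ₖ B) / minIdx A ∈ S B := by
        refine ⟨le_of_lt (div_pos hcpos hapos), (char hB _).mpr fun y => ?_⟩
        rw [div_mul_eq_mul_div, div_le_iff₀ hapos]
        calc minIdx (A ⊗ₖ B) * Complex.normSq (∑ j, y j)
            ≤ minIdx A * (star y ⬝ᵥ B *ᵥ y).re := step1 y
          _ = (star y ⬝ᵥ B *ᵥ y).re * minIdx A := mul_comm _ _
      have h2 := le_csSup (bddAbove_S hB) hmem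
      rw [div_le_iff₀ hapos] at h2
      calc minIdx (A ⊗ₖ B) ≤ minIdx B * minIdx A := h2
        _ = minIdx A * minIdx B := mul_comm _ _
    · rw [← h0]
      exact mul_nonneg ha hb
  · -- minIdx A * minIdx B ≤ minIdx (A ⊗ₖ B)
    apply le_csSup (bddAbove_S hAB)
    refine ⟨mul_nonneg ha hb, ?_⟩
    have hdecomp : A ⊗ₖ B - ((minIdx A * minIdx B : ℝ) : ℂ) • (Matrix.of fun _ _ => (1 : ℂ))
        = (A - (minIdx A : ℂ) • Jm (Fin n)) ⊗ₖ B
          + ((minIdx A : ℂ) • Jm (Fin n)) ⊗ₖ (B - (minIdx B : ℂ) • Jm (Fin m)) := by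
      ext ⟨i, j⟩ ⟨c, d⟩
      simp only [Matrix.sub_apply, Matrix.smul_apply, Matrix.of_apply, Matrix.add_apply, kroneckerMap_apply, Jm,
        smul_eq_mul, Complex.ofReal_mul]
      ring
    rw [hdecomp]
    have h1 : (A - (minIdx A : ℂ) • Jm (Fin n)).PosSemidef := (sup_mem_S hA).2
    have h2 : (B - (minIdx B : ℂ) • Jm (Fin m)).PosSemidef := (sup_mem_S hB).2
    exact psd_add (kron_posSemidef h1 hB) (kron_posSemidef (smulJ_posSemidef ha) h2)
end

section
/- If A is a positive semidefinite invertible n×n matrix, then I(A) = (Σ_{i,j} (A^{-1})_{ij})^{-1} = ⟨p, A^{-1}p⟩^{-1}, where p = (1,...,1). -/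
open Matrix ComplexOrder

theorem minIdx_of_invertible {n : ℕ} (A : Matrix (Fin n) (Fin n) ℂ)
    (hA : A.PosSemidef) (hinv : IsUnit A) :
    (minIdx A : ℂ) = (∑ i, ∑ j, A⁻¹ i j)⁻¹ ∧
    (minIdx A : ℂ) = ((fun _ => (1 : ℂ)) ⬝ᵥ A⁻¹.mulVec (fun _ => 1))⁻¹ := by
  set p : Fin n → ℂ := fun _ => 1 with hp
  set P : Matrix (Fin n) (Fin n) ℂ := Matrix.of fun _ _ => (1 : ℂ) with hP
  set c : ℂ := p ⬝ᵥ (A⁻¹ *ᵥ p) with hc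
  have hstarp : star p = p := by funext i; simp [hp]
  have hsum : (∑ i, ∑ j, A⁻¹ i j) = c := by
    simp [hc, hp, dotProduct, mulVec, Finset.mul_sum]
  have hkey : (minIdx A : ℂ) = c⁻¹ := by
    rcases Nat.eq_zero_or_pos n with hn | hn
    · subst hn
      have h1 : c = 0 := by simp [hc, dotProduct]
      have h2 : minIdx A = 0 := by
        have hset : {t : ℝ | 0 ≤ t ∧ (A - (t : ℂ) • P).PosSemidef} = Set.Ici 0 := by
          ext t
          simp only [Set.mem_setOf_eq, Set.mem_Ici, and_iff_left_iff_imp]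
          intro _
          refine Matrix.posSemidef_iff_dotProduct_mulVec.mpr ⟨?_, ?_⟩
          · ext i j; exact i.elim0
          · intro x
            simp [dotProduct]
        rw [minIdx, ← hP, hset, Real.sSup_def]
        rw [dif_neg]
        rintro ⟨-, b, hb⟩
        have h2 := hb (Set.mem_Ici.mpr (by positivity : (0:ℝ) ≤ max b 0 + 1))
        linarith [le_max_left b 0]
      rw [h2, h1]; simp
    · -- main case
      have : Nonempty (Fin n) := ⟨⟨0, hn⟩⟩
      have hdet : IsUnit A.det := (Matrix.isUnit_iff_isUnit_det A).mp hinv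
      have hAAinv : A * A⁻¹ = 1 := Matrix.mul_nonsing_inv A hdet
      have hIps : A⁻¹.PosSemidef := hA.inv
      have hpne : p ≠ 0 := by
        intro h
        have := congr_fun h ⟨0, hn⟩
        simp [hp] at this
      have hcnn : 0 ≤ c := by
        have := hIps.dotProduct_mulVec_nonneg p
        rwa [hstarp] at this
      have hcne : c ≠ 0 := by
        intro h
        have h0 : A⁻¹ *ᵥ p = 0 := by
          apply (hIps.dotProduct_mulVec_zero_iff p).mp
          rw [hstarp, ← hc, h]
        have : p = 0 := by
          have := congrArg (A *ᵥ ·) h0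
          simpa [Matrix.mulVec_mulVec, hAAinv] using this
        exact hpne this
      have hcpos : 0 < c := lt_of_le_of_ne hcnn (Ne.symm hcne)
      have hcre : 0 < c.re := (Complex.lt_def.mp hcpos).1
      have hcim : c.im = 0 := ((Complex.lt_def.mp hcpos).2).symm
      have hcreal : (c.re : ℂ) = c := Complex.ext rfl (by simp [hcim])
      have hstarc : star c = c := by
        rw [← hcreal, RCLike.star_def, Complex.conj_ofReal]
      set y : Fin n → ℂ := A⁻¹ *ᵥ p with hy
      have hAy : A *ᵥ y = p := by
        rw [hy, Matrix.mulVec_mulVec, hAAinv, Matrix.one_mulVec]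
      have hyA : star y ᵥ* A = p := by
        calc star y ᵥ* A = star y ᵥ* (Aᴴ)ᴴ := by rw [conjTranspose_conjTranspose]
        _ = star (Aᴴ *ᵥ y) := (star_mulVec _ _).symm
        _ = star (A *ᵥ y) := by rw [hA.isHermitian.eq]
        _ = p := by rw [hAy, hstarp]
      have hyAx : ∀ w : Fin n → ℂ, star y ⬝ᵥ (A *ᵥ w) = p ⬝ᵥ w := by
        intro w; rw [dotProduct_mulVec, hyA]
      have hyc : star y ⬝ᵥ p = c := by
        have := hyAx y
        rwa [hAy] at this
      -- P acting
      have hPv : ∀ w : Fin n → ℂ, P *ᵥ w = fun _ => p ⬝ᵥ w := by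
        intro w; funext i; simp [hP, mulVec, dotProduct, hp]
      have hxP : ∀ w : Fin n → ℂ, star w ⬝ᵥ (P *ᵥ w) = star (p ⬝ᵥ w) * (p ⬝ᵥ w) := by
        intro w
        rw [hPv w]
        simp [dotProduct, hp, Finset.sum_mul, star_sum]
      have hxp : ∀ w : Fin n → ℂ, star w ⬝ᵥ p = star (p ⬝ᵥ w) := by
        intro w
        simp [dotProduct, hp, star_sum]
      -- set of t
      set b : ℝ := (c.re)⁻¹ with hb
      have hbpos : 0 < b := by positivity
      have hbc : (b : ℂ) = c⁻¹ := by
        rw [hb, Complex.ofReal_inv, hcreal]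
      have hset : {t : ℝ | 0 ≤ t ∧ (A - (t : ℂ) • P).PosSemidef} = Set.Icc 0 b := by
        ext t
        simp only [Set.mem_setOf_eq, Set.mem_Icc]
        constructor
        · rintro ⟨ht0, hpsd⟩
          refine ⟨ht0, ?_⟩
          have h2 := hpsd.dotProduct_mulVec_nonneg y
          have hval : star y ⬝ᵥ ((A - (t:ℂ) • P) *ᵥ y) = c - t * (c * c) := by
            rw [Matrix.sub_mulVec, dotProduct_sub, smul_mulVec, dotProduct_smul,
              hxP y, hyAx y, ← hc]
            simp only [smul_eq_mul, hstarc]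
          rw [hval] at h2
          have h5 : (0:ℂ) ≤ ((c.re - t * (c.re * c.re) : ℝ) : ℂ) := by
            rw [show ((c.re - t * (c.re * c.re) : ℝ) : ℂ) = c - (t:ℂ) * (c * c) by
              push_cast [hcreal]; ring]
            exact h2
          rw [Complex.zero_le_real] at h5
          have h3 : t * c.re ≤ 1 := by nlinarith
          have h4 := mul_le_mul_of_nonneg_right h3 (inv_pos.mpr hcre).le
          rw [mul_assoc, mul_inv_cancel₀ hcre.ne', mul_one, one_mul] at h4
          exact h4
        · rintro ⟨ht0, htb⟩
          refine ⟨ht0, ?_⟩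
          refine Matrix.posSemidef_iff_dotProduct_mulVec.mpr ⟨?_, ?_⟩
          · -- Hermitian
            have h1 : ((t:ℂ) • P).IsHermitian := by
              ext i j
              simp [hP, Matrix.conjTranspose_apply, Complex.conj_ofReal]
            exact hA.isHermitian.sub h1
          · intro x
            set s : ℂ := p ⬝ᵥ x with hs
            set z : Fin n → ℂ := x - (s / c) • y with hz
            have hq := hA.dotProduct_mulVec_nonneg x
            have hzq := hA.dotProduct_mulVec_nonneg z
            have hzval : star z ⬝ᵥ (A *ᵥ z)
                = star x ⬝ᵥ (A *ᵥ x) - star s * s / c := by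
              rw [hz, Matrix.mulVec_sub, Matrix.mulVec_smul, hAy, star_sub, star_smul,
                sub_dotProduct, dotProduct_sub, dotProduct_sub, smul_dotProduct, smul_dotProduct,
                dotProduct_smul, dotProduct_smul, hyAx x, hyc, hxp x]
              simp only [smul_eq_mul, star_div₀, hstarc]
              field_simp
              ring
            have hval : star x ⬝ᵥ ((A - (t:ℂ) • P) *ᵥ x)
                = star z ⬝ᵥ (A *ᵥ z) + (((b - t : ℝ)) : ℂ) * (star s * s) := by
              rw [Matrix.sub_mulVec, dotProduct_sub, smul_mulVec, dotProduct_smul,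
                hxP x, hzval]
              rw [Complex.ofReal_sub, hbc]
              simp only [smul_eq_mul]
              field_simp
              ring
            rw [hval]
            apply add_nonneg hzq
            apply mul_nonneg
            · rw [Complex.zero_le_real]; linarith
            · exact star_mul_self_nonneg s
      have hmin : minIdx A = b := by
        rw [minIdx, ← hP, hset, csSup_Icc hbpos.le]
      rw [hmin, hbc]
  constructor
  · rw [hkey, hsum]
  · rw [hkey]
end

section
/- Let A be a real symmetric positive semidefinite n×n matrix, M = {z ∈ ℝ^n : Σ_i z_i = 1}, and p = (1,...,1). Then the set {z ∈ M : ⟨Az, z⟩ = I(A)} equals the set {z ∈ M : Az = I(A)·p}, and this set is nonempty. -/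
open Matrix

/-- The minimal Hadamard index `I(A)` of a real symmetric positive semidefinite matrix. -/
noncomputable def minIdxR {k : Type*} [Fintype k] (A : Matrix k k ℝ) : ℝ :=
  sSup {t : ℝ | 0 ≤ t ∧ (A - t • (Matrix.of fun _ _ => (1 : ℝ))).PosSemidef}

/-- On the hyperplane `M = {z : ∑ z_i = 1}`, the minimizers of the quadratic form
`⟨Az, z⟩` are exactly the solutions of `Az = I(A)·p`, and they exist. -/
theorem quadratic_minimizers_eq_solutions {n : ℕ} (hn : 0 < n)
    (A : Matrix (Fin n) (Fin n) ℝ) (hA : A.PosSemidef) :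
    {z : Fin n → ℝ | (∑ i, z i) = 1 ∧ z ⬝ᵥ A.mulVec z = minIdxR A} =
      {z : Fin n → ℝ | (∑ i, z i) = 1 ∧ A.mulVec z = fun _ => minIdxR A} ∧
    {z : Fin n → ℝ | (∑ i, z i) = 1 ∧ A.mulVec z = fun _ => minIdxR A}.Nonempty := by
  set J : Matrix (Fin n) (Fin n) ℝ := Matrix.of fun _ _ => (1 : ℝ) with hJ
  set S : Set ℝ := {t : ℝ | 0 ≤ t ∧ (A - t • J).PosSemidef} with hSdef
  have hμdef : minIdxR A = sSup S := rfl
  set μ : ℝ := sSup S with hμ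
  -- basic computations
  have hJmul : ∀ z : Fin n → ℝ, J *ᵥ z = fun _ => ∑ i, z i := by
    intro z; funext i; simp [hJ, Matrix.mulVec, dotProduct]
  have hquad : ∀ (t : ℝ) (z : Fin n → ℝ),
      z ⬝ᵥ (A - t • J) *ᵥ z = z ⬝ᵥ A *ᵥ z - t * (∑ i, z i) ^ 2 := by
    intro t z
    rw [Matrix.sub_mulVec, Matrix.smul_mulVec, dotProduct_sub, dotProduct_smul, hJmul]
    simp only [smul_eq_mul, dotProduct, ← Finset.sum_mul]
    ring
  have hherm : ∀ t : ℝ, (A - t • J).IsHermitian := by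
    intro t
    have hJh : Jᴴ = J := by ext i j; simp [hJ]
    unfold Matrix.IsHermitian
    rw [conjTranspose_sub, conjTranspose_smul, hJh, hA.1, star_trivial]
  have hS0 : (0 : ℝ) ∈ S := by
    refine ⟨le_refl _, ?_⟩
    simpa using hA
  have hSne : S.Nonempty := ⟨0, hS0⟩
  -- boundedness
  have hbdd : BddAbove S := by
    set p : Fin n → ℝ := fun _ => 1 with hp
    have hsum : (∑ i, p i) = (n : ℝ) := by simp [hp]
    refine ⟨(p ⬝ᵥ A *ᵥ p) / (n : ℝ) ^ 2, fun t ht => ?_⟩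
    have h1 : 0 ≤ p ⬝ᵥ (A - t • J) *ᵥ p := by
      have := ht.2.dotProduct_mulVec_nonneg p
      simpa using this
    rw [hquad, hsum] at h1
    have hn2 : (0 : ℝ) < (n : ℝ) ^ 2 := by positivity
    rw [le_div_iff₀ hn2]
    linarith
  have hμ0 : 0 ≤ μ := le_csSup hbdd hS0
  -- key inequality
  have L1 : ∀ z : Fin n → ℝ, μ * (∑ i, z i) ^ 2 ≤ z ⬝ᵥ A *ᵥ z := by
    intro z
    rcases eq_or_ne (∑ i, z i) 0 with h | h
    · rw [h]
      have := hA.dotProduct_mulVec_nonneg z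
      simpa using this
    · have hpos : (0 : ℝ) < (∑ i, z i) ^ 2 := by positivity
      have : μ ≤ (z ⬝ᵥ A *ᵥ z) / (∑ i, z i) ^ 2 := by
        refine csSup_le hSne fun t ht => ?_
        have h1 : 0 ≤ z ⬝ᵥ (A - t • J) *ᵥ z := by simpa using ht.2.dotProduct_mulVec_nonneg z
        rw [hquad] at h1
        rw [le_div_iff₀ hpos]
        linarith
      rw [le_div_iff₀ hpos] at this
      linarith [this]
  have hBpsd : (A - μ • J).PosSemidef := by
    refine Matrix.PosSemidef.of_dotProduct_mulVec_nonneg (hherm μ) fun z => ?_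
    have := L1 z
    simp only [star_trivial]
    rw [hquad]
    linarith
  -- set equality
  have heq : {z : Fin n → ℝ | (∑ i, z i) = 1 ∧ z ⬝ᵥ A.mulVec z = minIdxR A} =
      {z : Fin n → ℝ | (∑ i, z i) = 1 ∧ A.mulVec z = fun _ => minIdxR A} := by
    ext z
    simp only [Set.mem_setOf_eq, hμdef, ← hμ]
    constructor
    · rintro ⟨hz1, hz2⟩
      refine ⟨hz1, ?_⟩
      have h0 : z ⬝ᵥ (A - μ • J) *ᵥ z = 0 := by
        rw [hquad, hz1, hz2]; ring
      have hker : (A - μ • J) *ᵥ z = 0 := by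
        refine (hBpsd.dotProduct_mulVec_zero_iff z).mp ?_
        simpa using h0
      rw [Matrix.sub_mulVec, Matrix.smul_mulVec, sub_eq_zero] at hker
      rw [hker, hJmul, hz1]
      funext i; simp
    · rintro ⟨hz1, hz2⟩
      refine ⟨hz1, ?_⟩
      rw [hz2]
      simp [dotProduct, ← Finset.sum_mul, hz1]
  refine ⟨heq, ?_⟩
  -- nonemptiness
  set B : Matrix (Fin n) (Fin n) ℝ := A - μ • J with hB
  have hBsym : ∀ v w : Fin n → ℝ, (B *ᵥ v) ⬝ᵥ w = v ⬝ᵥ B *ᵥ w := by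
    intro v w
    rw [Matrix.dotProduct_mulVec v B w, ← Matrix.mulVec_transpose]
    have : Bᵀ = B := by
      rw [← conjTranspose_eq_transpose_of_trivial]; exact hBpsd.1
    rw [this, dotProduct_comm]
  set f := B.mulVecLin with hf
  have hdisj : Disjoint (LinearMap.ker f) (LinearMap.range f) := by
    rw [Submodule.disjoint_def]
    intro x hxk hxr
    obtain ⟨y, rfl⟩ := hxr
    have h1 : B *ᵥ (B *ᵥ y) = 0 := hxk
    have h2 : (B *ᵥ y) ⬝ᵥ (B *ᵥ y) = 0 := by
      rw [hBsym y (B *ᵥ y), h1, dotProduct_zero]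
    have := dotProduct_self_eq_zero.mp h2
    simpa [hf] using this
  have hdim : Module.finrank ℝ ↥(LinearMap.ker f) + Module.finrank ℝ ↥(LinearMap.range f)
      = Module.finrank ℝ (Fin n → ℝ) := by
    rw [add_comm]; exact f.finrank_range_add_finrank_ker
  have htop : LinearMap.ker f ⊔ LinearMap.range f = ⊤ :=
    Submodule.eq_top_of_disjoint _ _ hdim.ge hdisj
  set p : Fin n → ℝ := fun _ => 1 with hp
  have hpmem : p ∈ LinearMap.ker f ⊔ LinearMap.range f := htop ▸ Submodule.mem_top
  rw [Submodule.mem_sup] at hpmem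
  obtain ⟨u, hu, v, hv, huv⟩ := hpmem
  obtain ⟨w, rfl⟩ := hv
  have hBu : B *ᵥ u = 0 := by
    simpa [hf, Matrix.mulVecLin_apply] using (LinearMap.mem_ker.mp hu)
  have hfw : f w = B *ᵥ w := rfl
  rw [hfw] at huv
  have hsumu : (∑ i, u i) = u ⬝ᵥ u := by
    have h1 : p ⬝ᵥ u = ∑ i, u i := by simp [hp, dotProduct]
    have h2 : p ⬝ᵥ u = u ⬝ᵥ u + (B *ᵥ w) ⬝ᵥ u := by
      rw [← huv, add_dotProduct]
    have h3 : (B *ᵥ w) ⬝ᵥ u = 0 := by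
      rw [hBsym w u, hBu, dotProduct_zero]
    rw [h1, h3, add_zero] at h2
    exact h2
  by_cases hu0 : u = 0
  · -- contradiction with maximality of μ
    exfalso
    rw [hu0, zero_add] at huv
    have hsym : ∀ z : Fin n → ℝ, z ⬝ᵥ B *ᵥ w = w ⬝ᵥ B *ᵥ z := by
      intro z
      rw [← hBsym w z, dotProduct_comm]
    have hc0 : w ⬝ᵥ B *ᵥ w ≠ 0 := by
      intro h
      have h1 : B *ᵥ w = 0 := (hBpsd.dotProduct_mulVec_zero_iff w).mp (by simpa using h)
      have hp0 : p = 0 := by rw [← huv, h1]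
      exact one_ne_zero (congrFun hp0 ⟨0, hn⟩)
    have hcpos : 0 < w ⬝ᵥ B *ᵥ w :=
      lt_of_le_of_ne (by simpa using hBpsd.dotProduct_mulVec_nonneg w) (Ne.symm hc0)
    set c : ℝ := w ⬝ᵥ B *ᵥ w with hc
    have hCS : ∀ z : Fin n → ℝ, (w ⬝ᵥ B *ᵥ z) ^ 2 ≤ c * (z ⬝ᵥ B *ᵥ z) := by
      intro z
      have hquadform : ∀ x : ℝ,
          0 ≤ c * (x * x) + (2 * (w ⬝ᵥ B *ᵥ z)) * x + z ⬝ᵥ B *ᵥ z := by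
        intro x
        have h0 := hBpsd.dotProduct_mulVec_nonneg (z + x • w)
        simp only [star_trivial, Matrix.mulVec_add, Matrix.mulVec_smul, dotProduct_add,
          add_dotProduct, dotProduct_smul, smul_dotProduct, smul_eq_mul] at h0
        rw [hsym z] at h0
        calc (0:ℝ) ≤ _ := h0
        _ = c * (x * x) + (2 * (w ⬝ᵥ B *ᵥ z)) * x + z ⬝ᵥ B *ᵥ z := by rw [hc]; ring
      have hd := discrim_le_zero hquadform
      rw [discrim] at hd
      nlinarith [hd]
    have hmem : μ + 1 / c ∈ S := by
      refine ⟨by positivity, Matrix.PosSemidef.of_dotProduct_mulVec_nonneg (hherm (μ + 1 / c)) ?_⟩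
      intro z
      simp only [star_trivial]
      rw [hquad]
      have hsz : (∑ i, z i) = w ⬝ᵥ B *ᵥ z := by
        have h1 : p ⬝ᵥ z = ∑ i, z i := by simp [hp, dotProduct]
        rw [← h1, ← huv]
        exact hBsym w z
      have hq := hquad μ z
      rw [← hB] at hq
      have h4 : (1 / c) * (w ⬝ᵥ B *ᵥ z) ^ 2 ≤ (1 / c) * (c * (z ⬝ᵥ B *ᵥ z)) := by
        apply mul_le_mul_of_nonneg_left (hCS z)
        positivity
      have h5 : (1 / c) * (c * (z ⬝ᵥ B *ᵥ z)) = z ⬝ᵥ B *ᵥ z := by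
        field_simp
      rw [hsz] at hq ⊢
      have hexp : (μ + 1 / c) * (w ⬝ᵥ B *ᵥ z) ^ 2
          = μ * (w ⬝ᵥ B *ᵥ z) ^ 2 + 1 / c * (w ⬝ᵥ B *ᵥ z) ^ 2 := by ring
      rw [hexp]
      linarith [h4, h5, hq]
    have hle : μ + 1 / c ≤ μ := le_csSup hbdd hmem
    have : 0 < 1 / c := by positivity
    linarith
  · -- minimizer exists
    have h0le : 0 ≤ u ⬝ᵥ u := by
      rw [dotProduct]
      exact Finset.sum_nonneg fun i _ => mul_self_nonneg _
    have huu : 0 < u ⬝ᵥ u :=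
      h0le.lt_of_ne fun h => hu0 (dotProduct_self_eq_zero.mp h.symm)
    have hsne : (∑ i, u i) ≠ 0 := by rw [hsumu]; exact ne_of_gt huu
    refine ⟨(∑ i, u i)⁻¹ • u, ?_, ?_⟩
    · show (∑ i, ((∑ j, u j)⁻¹ • u) i) = 1
      simp only [Pi.smul_apply, smul_eq_mul, ← Finset.mul_sum]
      exact inv_mul_cancel₀ hsne
    · show A *ᵥ ((∑ i, u i)⁻¹ • u) = fun _ => minIdxR A
      have hAu : A *ᵥ u = μ • (J *ᵥ u) := by
        have h1 : A *ᵥ u - μ • (J *ᵥ u) = 0 := by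
          rw [← Matrix.smul_mulVec, ← Matrix.sub_mulVec]
          exact hBu
        exact sub_eq_zero.mp h1
      rw [Matrix.mulVec_smul, hAu, hJmul, hμdef]
      funext i
      simp only [Pi.smul_apply, smul_eq_mul]
      rw [mul_comm μ, ← mul_assoc, inv_mul_cancel₀ hsne, one_mul]
end

section
/- Let A ∈ M_n(ℂ), x ∈ ℂ^n a unit vector with all entries nonzero, y = (|x_1|²,...,|x_n|²), p = (1,...,1). If (A ∘ xx*)x = λx for some λ ∈ ℂ, then Ay = λp. Moreover if A is positive semidefinite then λ = I(A). -/
open Matrix ComplexOrder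

/-- If a unit vector `x` with nonzero entries is an eigenvector of `A ∘ xx*` with
eigenvalue `λ`, then `Ay = λp` for `y = (|x_1|²,...,|x_n|²)`; moreover if `A` is
positive semidefinite then `λ = I(A)`. -/
theorem mulVec_of_hadamard_eigenvector {n : ℕ} (A : Matrix (Fin n) (Fin n) ℂ)
    (x : Fin n → ℂ) (hx : (∑ i, ‖x i‖ ^ 2) = 1) (hxne : ∀ i, x i ≠ 0) (l : ℂ)
    (heig : (A.hadamard (Matrix.vecMulVec x (star x))).mulVec x = l • x) :
    (A.mulVec (fun i => ((‖x i‖ : ℂ) ^ 2)) = fun _ => l) ∧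
    (A.PosSemidef → l = (minIdx A : ℂ)) := by
  classical
  set y : Fin n → ℂ := fun i => ((‖x i‖ : ℂ) ^ 2) with hy
  have hconj : ∀ z : ℂ, (starRingEnd ℂ) z * z = (‖z‖ : ℂ) ^ 2 := by
    intro z
    rw [← Complex.normSq_eq_conj_mul_self, Complex.normSq_eq_norm_sq]
    push_cast; ring
  -- Part 1
  have hAy : A.mulVec y = fun _ => l := by
    funext i
    have h := congrFun heig i
    simp only [mulVec, dotProduct, hadamard_apply, vecMulVec_apply, Pi.star_apply,
      Pi.smul_apply, smul_eq_mul] at h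
    have h2 : x i * ∑ j, A i j * y j = x i * l := by
      rw [Finset.mul_sum, mul_comm (x i) l, ← h]
      refine Finset.sum_congr rfl fun j _ => ?_
      simp only [hy, Complex.star_def]
      rw [← hconj (x j)]
      ring
    have := mul_left_cancel₀ (hxne i) h2
    simpa [mulVec, dotProduct] using this
  refine ⟨hAy, fun hA => ?_⟩
  -- setup
  have hystar : star y = y := by
    funext i
    simp [hy, star_pow, Complex.star_def, Complex.conj_ofReal]
  have hysum : ∑ i, y i = 1 := by
    have h1 : ((∑ i, ‖x i‖ ^ 2 : ℝ) : ℂ) = 1 := by rw [hx]; norm_num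
    push_cast at h1
    simpa [hy] using h1
  have hyQ : star y ⬝ᵥ A.mulVec y = l := by
    rw [hystar, hAy]
    simp [dotProduct, ← Finset.sum_mul, hysum]
  have hl0 : 0 ≤ l := hyQ ▸ hA.dotProduct_mulVec_nonneg y
  have hlim : l.im = 0 := (Complex.nonneg_iff.mp hl0).2.symm
  have hlre : l = (l.re : ℂ) := by
    apply Complex.ext <;> simp [hlim]
  have hlre0 : 0 ≤ l.re := (Complex.nonneg_iff.mp hl0).1
  set J : Matrix (Fin n) (Fin n) ℂ := Matrix.of fun _ _ => (1 : ℂ) with hJ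
  have hJmul : ∀ v : Fin n → ℂ, J.mulVec v = fun _ => ∑ j, v j := by
    intro v; funext i; simp [hJ, mulVec, dotProduct]
  -- quadratic form with J
  have hQJ : ∀ (t : ℝ) (v : Fin n → ℂ),
      star v ⬝ᵥ (A - (t : ℂ) • J).mulVec v
        = star v ⬝ᵥ A.mulVec v - (t : ℂ) * ((starRingEnd ℂ) (∑ j, v j) * (∑ j, v j)) := by
    intro t v
    rw [sub_mulVec, dotProduct_sub, smul_mulVec, dotProduct_smul, hJmul]
    simp only [smul_eq_mul]
    congr 1
    simp [dotProduct, ← Finset.sum_mul, map_sum]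
  -- upper bound : every element of the set is ≤ l.re
  have hub : ∀ t ∈ {t : ℝ | 0 ≤ t ∧ (A - (t : ℂ) • J).PosSemidef}, t ≤ l.re := by
    intro t ht
    have h := ht.2.dotProduct_mulVec_nonneg y
    rw [hQJ t y, hyQ, hysum] at h
    simp only [_root_.map_one, one_mul, mul_one] at h
    have h2 := (Complex.nonneg_iff.mp h).1
    rw [Complex.sub_re, Complex.ofReal_re] at h2
    linarith
  -- membership : A - l.re • J is PSD
  have hmem : (0 : ℝ) ≤ l.re ∧ (A - ((l.re : ℝ) : ℂ) • J).PosSemidef := by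
    refine ⟨hlre0, Matrix.PosSemidef.of_dotProduct_mulVec_nonneg ?_ ?_⟩
    · -- Hermitian
      have : ((l.re : ℝ) : ℂ) • J = (((l.re : ℝ) : ℂ) • J)ᴴ := by
        funext i j
        simp [hJ, Complex.star_def, Complex.conj_ofReal]
      unfold Matrix.IsHermitian
      rw [conjTranspose_sub, hA.1, ← this]
    · intro v
      set s := ∑ j, v j with hs
      have hQv := hA.dotProduct_mulVec_nonneg v
      have hQim : (star v ⬝ᵥ A.mulVec v).im = 0 := ((Complex.nonneg_iff.mp hQv).2).symm
      have hQre : 0 ≤ (star v ⬝ᵥ A.mulVec v).re := (Complex.nonneg_iff.mp hQv).1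
      obtain ⟨B, hB⟩ : ∃ B : Matrix (Fin n) (Fin n) ℂ, A = Bᴴ * B := by
        open scoped MatrixOrder in
        exact CStarAlgebra.nonneg_iff_eq_star_mul_self.mp hA.nonneg
      have hBv : ∀ a b : Fin n → ℂ, star (B.mulVec a) ⬝ᵥ (B.mulVec b) = star a ⬝ᵥ A.mulVec b := by
        intro a b
        rw [star_mulVec, ← dotProduct_mulVec, mulVec_mulVec, ← hB]
      have hcs := inner_mul_inner_self_le (𝕜 := ℂ)
        ((WithLp.equiv 2 _).symm (B.mulVec v) : EuclideanSpace ℂ (Fin n))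
        ((WithLp.equiv 2 _).symm (B.mulVec y))
      rw [norm_inner_symm ((WithLp.equiv 2 _).symm (B.mulVec y))] at hcs
      simp only [WithLp.equiv_symm_apply, EuclideanSpace.inner_toLp_toLp, dotProduct_comm _ (star _)] at hcs
      rw [hBv v y, hBv v v, hBv y y, hyQ, hAy] at hcs
      have e1 : star v ⬝ᵥ (fun _ : Fin n => l) = (starRingEnd ℂ) s * l := by
        simp [dotProduct, hs, ← Finset.sum_mul, map_sum]
      rw [e1] at hcs
      have e2 : ‖(starRingEnd ℂ) s * l‖ = ‖s‖ * l.re := by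
        rw [norm_mul, RCLike.norm_conj]
        congr 1
        conv_lhs => rw [hlre]
        rw [Complex.norm_real]
        exact abs_of_nonneg hlre0
      rw [e2] at hcs
      -- hcs : (‖s‖ * l.re) * (‖s‖ * l.re) ≤ re Q * re l
      have hre : RCLike.re (star v ⬝ᵥ A.mulVec v) = (star v ⬝ᵥ A.mulVec v).re := rfl
      have hrel : RCLike.re l = l.re := rfl
      rw [hre, hrel] at hcs
      have key : l.re * ‖s‖ ^ 2 ≤ (star v ⬝ᵥ A.mulVec v).re := by
        rcases eq_or_lt_of_le hlre0 with h0 | hpos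
        · rw [← h0]; simpa using hQre
        · nlinarith [hcs, hpos]
      rw [hQJ l.re v, ← hs, hconj s]
      have hcast : ((l.re : ℂ)) * ((‖s‖ : ℂ)) ^ 2 = ((l.re * ‖s‖ ^ 2 : ℝ) : ℂ) := by
        push_cast; ring
      rw [hcast, Complex.nonneg_iff]
      constructor
      · rw [Complex.sub_re, Complex.ofReal_re]
        linarith
      · simp [Complex.sub_im, hQim, ← Complex.ofReal_pow]
  have hgr : IsGreatest {t : ℝ | 0 ≤ t ∧ (A - (t : ℂ) • J).PosSemidef} l.re := ⟨hmem, hub⟩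
  have : minIdx A = l.re := by
    rw [minIdx]
    exact hgr.csSup_eq
  rw [this, ← hlre]
end

section
/- For any positive semidefinite n×n matrix A, the Frobenius-norm Hadamard index is attained at a rank-one projection: there exists a unit vector x ∈ ℂ^n such that I(2, A) = ‖A ∘ xx*‖_2, where ‖·‖_2 is the Frobenius norm. -/
open Matrix ComplexOrder

/-- The Frobenius norm of a complex matrix. -/
noncomputable def frobNorm {k : Type*} [Fintype k] (A : Matrix k k ℂ) : ℝ :=
  Real.sqrt (∑ i, ∑ j, ‖A i j‖ ^ 2)

/-- The Frobenius-norm Hadamard index `I(2, A)`. -/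
noncomputable def frobIdx {k : Type*} [Fintype k] (A : Matrix k k ℂ) : ℝ :=
  sInf {r : ℝ | ∃ B : Matrix k k ℂ, B.PosSemidef ∧ frobNorm B = 1 ∧ r = frobNorm (A.hadamard B)}

section Aux

open Finset Complex

variable {n : ℕ}
local notation "cj" => starRingEnd ℂ

theorem sum_swap4 {α : Type*} [AddCommMonoid α] {ι : Type*} [Fintype ι]
    (f : ι → ι → ι → ι → α) :
    ∑ i, ∑ j, ∑ k, ∑ l, f i j k l = ∑ k, ∑ l, ∑ i, ∑ j, f i j k l :=
  calc ∑ i, ∑ j, ∑ k, ∑ l, f i j k l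
      = ∑ i, ∑ k, ∑ j, ∑ l, f i j k l := Finset.sum_congr rfl fun _ _ => Finset.sum_comm
    _ = ∑ k, ∑ i, ∑ j, ∑ l, f i j k l := Finset.sum_comm
    _ = ∑ k, ∑ i, ∑ l, ∑ j, f i j k l :=
        Finset.sum_congr rfl fun _ _ => Finset.sum_congr rfl fun _ _ => Finset.sum_comm
    _ = ∑ k, ∑ l, ∑ i, ∑ j, f i j k l := Finset.sum_congr rfl fun _ _ => Finset.sum_comm

theorem master (M : Fin n → Fin n → ℂ) (c : Fin n → Fin n → Fin n → ℂ) :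
    ∑ i, ∑ j, M i j * ((∑ k, c k i j) * cj (∑ l, c l i j))
      = ∑ k, ∑ l, ∑ i, ∑ j, M i j * (c k i j * cj (c l i j)) := by
  rw [← sum_swap4]
  refine Finset.sum_congr rfl fun i _ => Finset.sum_congr rfl fun j _ => ?_
  rw [map_sum, Finset.sum_mul_sum, Finset.mul_sum]
  exact Finset.sum_congr rfl fun k _ => by rw [Finset.mul_sum]

theorem entry_formula {B : Matrix (Fin n) (Fin n) ℂ} (hB : B.IsHermitian) (i j : Fin n) :
    B i j = ∑ k, ((hB.eigenvalues k : ℝ) : ℂ) *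
      ((hB.eigenvectorUnitary : Matrix (Fin n) (Fin n) ℂ) i k *
        cj ((hB.eigenvectorUnitary : Matrix (Fin n) (Fin n) ℂ) j k)) := by
  conv_lhs => rw [hB.spectral_theorem, Unitary.conjStarAlgAut_apply]
  simp only [Matrix.mul_apply, Matrix.diagonal_apply, Matrix.star_apply, ite_mul, zero_mul,
    mul_ite, mul_zero, Finset.sum_ite_eq, Finset.sum_ite_eq', Finset.mem_univ, if_true,
    Function.comp_apply, RCLike.star_def]
  exact Finset.sum_congr rfl fun k _ => (mul_right_comm _ _ _).trans (mul_comm _ _)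

theorem key_pos {A : Matrix (Fin n) (Fin n) ℂ} (hA : A.PosSemidef) (w : Fin n → ℂ) :
    0 ≤ (∑ i, ∑ j, ((‖A i j‖ ^ 2 : ℝ) : ℂ) * (w i * cj (w j))).re := by
  set V := (hA.1.eigenvectorUnitary : Matrix (Fin n) (Fin n) ℂ) with hV
  set μ := hA.1.eigenvalues with hμ
  have step1 : (∑ i, ∑ j, ((‖A i j‖ ^ 2 : ℝ) : ℂ) * (w i * cj (w j)))
      = ∑ p, ∑ q, ∑ i, ∑ j, (w i * cj (w j)) *
          (((μ p : ℝ) : ℂ) * (V i p * cj (V j p)) * cj (((μ q : ℝ) : ℂ) * (V i q * cj (V j q)))) := by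
    rw [← master (fun i j => w i * cj (w j))
      (fun p i j => ((μ p : ℝ) : ℂ) * (V i p * cj (V j p)))]
    refine Finset.sum_congr rfl fun i _ => Finset.sum_congr rfl fun j _ => ?_
    rw [← entry_formula hA.1 i j]
    rw [show ((‖A i j‖ ^ 2 : ℝ) : ℂ) = A i j * cj (A i j) by
      rw [mul_conj']; push_cast; ring]
    ring
  have step2 : ∀ p q, (∑ i, ∑ j, (w i * cj (w j)) *
          (((μ p : ℝ) : ℂ) * (V i p * cj (V j p)) * cj (((μ q : ℝ) : ℂ) * (V i q * cj (V j q)))))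
      = ((μ p * μ q * ‖∑ i, V i p * cj (V i q) * w i‖ ^ 2 : ℝ) : ℂ) := by
    intro p q
    have factored : (∑ i, ∑ j, (w i * cj (w j)) *
          (((μ p : ℝ) : ℂ) * (V i p * cj (V j p)) * cj (((μ q : ℝ) : ℂ) * (V i q * cj (V j q)))))
        = (∑ i, ((μ p : ℝ) : ℂ) * (V i p * cj (V i q) * w i)) *
          (∑ j, ((μ q : ℝ) : ℂ) * cj (V j p * cj (V j q) * w j)) := by
      rw [Finset.sum_mul_sum]
      refine Finset.sum_congr rfl fun i _ => Finset.sum_congr rfl fun j _ => ?_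
      simp only [_root_.map_mul, RingHomCompTriple.comp_apply, conj_conj, Complex.conj_ofReal]
      ring
    rw [factored, ← Finset.mul_sum, ← Finset.mul_sum, ← map_sum]
    rw [show ((μ p * μ q * ‖∑ i, V i p * cj (V i q) * w i‖ ^ 2 : ℝ) : ℂ)
        = ((μ p : ℝ) : ℂ) * ((μ q : ℝ) : ℂ) *
          ((∑ i, V i p * cj (V i q) * w i) * cj (∑ i, V i p * cj (V i q) * w i)) by
      rw [mul_conj']; push_cast; ring]
    ring
  rw [step1]
  have : (∑ p, ∑ q, ∑ i, ∑ j, (w i * cj (w j)) *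
          (((μ p : ℝ) : ℂ) * (V i p * cj (V j p)) * cj (((μ q : ℝ) : ℂ) * (V i q * cj (V j q)))))
      = ((∑ p, ∑ q, μ p * μ q * ‖∑ i, V i p * cj (V i q) * w i‖ ^ 2 : ℝ) : ℂ) := by
    push_cast
    exact Finset.sum_congr rfl fun p _ => Finset.sum_congr rfl fun q _ => by
      rw [step2 p q]; push_cast; ring
  rw [this, Complex.ofReal_re]
  refine Finset.sum_nonneg fun p _ => Finset.sum_nonneg fun q _ => ?_
  exact mul_nonneg (mul_nonneg (hA.eigenvalues_nonneg p) (hA.eigenvalues_nonneg q))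
    (sq_nonneg _)

theorem ortho_cols {B : Matrix (Fin n) (Fin n) ℂ} (hB : B.IsHermitian) (k l : Fin n) :
    ∑ i, cj ((hB.eigenvectorUnitary : Matrix (Fin n) (Fin n) ℂ) i k) *
        (hB.eigenvectorUnitary : Matrix (Fin n) (Fin n) ℂ) i l
      = if k = l then 1 else 0 := by
  have h := Unitary.coe_star_mul_self hB.eigenvectorUnitary
  have h2 : (star (hB.eigenvectorUnitary : Matrix (Fin n) (Fin n) ℂ) *
      (hB.eigenvectorUnitary : Matrix (Fin n) (Fin n) ℂ)) k l
      = (1 : Matrix (Fin n) (Fin n) ℂ) k l := by rw [h]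
  rw [Matrix.mul_apply] at h2
  simp only [Matrix.star_apply, Matrix.one_apply, RCLike.star_def] at h2
  exact h2.trans (by simp [Matrix.one_apply])

theorem frobSq {B : Matrix (Fin n) (Fin n) ℂ} (hB : B.IsHermitian) :
    ∑ i, ∑ j, ‖B i j‖ ^ 2 = ∑ k, hB.eigenvalues k ^ 2 := by
  set U := (hB.eigenvectorUnitary : Matrix (Fin n) (Fin n) ℂ) with hU
  set lam := hB.eigenvalues with hlam
  have key : ((∑ i, ∑ j, ‖B i j‖ ^ 2 : ℝ) : ℂ) = ((∑ k, lam k ^ 2 : ℝ) : ℂ) := by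
    push_cast
    calc (∑ i, ∑ j, (‖B i j‖ : ℂ) ^ 2)
        = ∑ i, ∑ j, (1 : ℂ) * ((∑ k, ((lam k : ℝ) : ℂ) * (U i k * cj (U j k))) *
            cj (∑ l, ((lam l : ℝ) : ℂ) * (U i l * cj (U j l)))) := by
          refine Finset.sum_congr rfl fun i _ => Finset.sum_congr rfl fun j _ => ?_
          rw [← entry_formula hB i j, one_mul, mul_conj']
      _ = ∑ k, ∑ l, ∑ i, ∑ j, (1 : ℂ) * ((((lam k : ℝ) : ℂ) * (U i k * cj (U j k))) *
            cj (((lam l : ℝ) : ℂ) * (U i l * cj (U j l)))) :=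
          master (fun _ _ => 1) (fun k i j => ((lam k : ℝ) : ℂ) * (U i k * cj (U j k)))
      _ = ∑ k, ∑ l, (((lam k : ℝ) : ℂ) * ((lam l : ℝ) : ℂ)) *
            ((∑ i, U i k * cj (U i l)) * (∑ j, cj (U j k) * U j l)) := by
          refine Finset.sum_congr rfl fun k _ => Finset.sum_congr rfl fun l _ => ?_
          rw [Finset.sum_mul_sum, Finset.mul_sum]
          refine Finset.sum_congr rfl fun i _ => ?_
          rw [Finset.mul_sum]
          refine Finset.sum_congr rfl fun j _ => ?_
          simp only [_root_.map_mul, RingHomCompTriple.comp_apply, conj_conj,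
            Complex.conj_ofReal, RingHom.id_apply]
          ring
      _ = ∑ k, ∑ l, (((lam k : ℝ) : ℂ) * ((lam l : ℝ) : ℂ)) *
            ((if k = l then 1 else 0) * (if k = l then 1 else 0)) := by
          refine Finset.sum_congr rfl fun k _ => Finset.sum_congr rfl fun l _ => ?_
          have h1 : (∑ j, cj (U j k) * U j l) = (if k = l then (1 : ℂ) else 0) :=
            ortho_cols hB k l
          have h2 : (∑ i, U i k * cj (U i l)) = (if k = l then (1 : ℂ) else 0) := by
            have h3 : (∑ i, U i k * cj (U i l)) = cj (∑ i, cj (U i k) * U i l) := by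
              rw [map_sum]
              refine Finset.sum_congr rfl fun i _ => ?_
              simp [mul_comm]
            rw [h3, h1]
            split <;> simp
          rw [h1, h2]
      _ = ∑ k, ((lam k : ℝ) : ℂ) ^ 2 := by
          refine Finset.sum_congr rfl fun k _ => ?_
          rw [Finset.sum_eq_single k]
          · simp [sq]
          · intro l _ hl
            simp [(Ne.symm hl)]
          · simp
  have := Complex.ofReal_injective key
  exact this

theorem main_ineq {A : Matrix (Fin n) (Fin n) ℂ} (hA : A.PosSemidef)
    {B : Matrix (Fin n) (Fin n) ℂ} (hB : B.PosSemidef)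
    (hfB : ∑ i, ∑ j, ‖B i j‖ ^ 2 = 1) (m : ℝ)
    (hmin : ∀ u : Fin n → ℂ, (∑ i, ‖u i‖ ^ 2) = 1 →
      m ≤ ∑ i, ∑ j, ‖A i j‖ ^ 2 * (‖u i‖ ^ 2 * ‖u j‖ ^ 2)) :
    m ≤ ∑ i, ∑ j, ‖A i j‖ ^ 2 * ‖B i j‖ ^ 2 := by
  set U := (hB.1.eigenvectorUnitary : Matrix (Fin n) (Fin n) ℂ) with hU
  set lam := hB.1.eigenvalues with hlamdef
  have hlam : ∀ k, 0 ≤ lam k := hB.eigenvalues_nonneg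
  have hcols : ∀ k, ∑ i, ‖U i k‖ ^ 2 = 1 := by
    intro k
    have h := ortho_cols hB.1 k k
    simp only [if_true] at h
    have h2 : ((∑ i, ‖U i k‖ ^ 2 : ℝ) : ℂ) = 1 := by
      push_cast
      rw [← h]
      exact Finset.sum_congr rfl fun i _ => by rw [conj_mul']
    exact_mod_cast h2
  set Q : Fin n → Fin n → ℝ := fun k l =>
    (∑ i, ∑ j, ((‖A i j‖ ^ 2 : ℝ) : ℂ) *
      ((U i k * cj (U i l)) * cj (U j k * cj (U j l)))).re with hQ
  have hQpos : ∀ k l, 0 ≤ Q k l := fun k l => key_pos hA (fun i => U i k * cj (U i l))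
  have hQdiag : ∀ k, m ≤ Q k k := by
    intro k
    have hc : (∑ i, ∑ j, ((‖A i j‖ ^ 2 : ℝ) : ℂ) *
        ((U i k * cj (U i k)) * cj (U j k * cj (U j k))))
        = ((∑ i, ∑ j, ‖A i j‖ ^ 2 * (‖U i k‖ ^ 2 * ‖U j k‖ ^ 2) : ℝ) : ℂ) := by
      push_cast
      refine Finset.sum_congr rfl fun i _ => Finset.sum_congr rfl fun j _ => ?_
      rw [mul_conj', mul_conj']
      push_cast
      rw [map_pow, Complex.conj_ofReal]
    have : Q k k = ∑ i, ∑ j, ‖A i j‖ ^ 2 * (‖U i k‖ ^ 2 * ‖U j k‖ ^ 2) := by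
      rw [hQ]; dsimp only; rw [hc, Complex.ofReal_re]
    rw [this]
    exact hmin (fun i => U i k) (hcols k)
  have expand : ∑ i, ∑ j, ‖A i j‖ ^ 2 * ‖B i j‖ ^ 2 = ∑ k, ∑ l, (lam k * lam l) * Q k l := by
    have hcplx : ((∑ i, ∑ j, ‖A i j‖ ^ 2 * ‖B i j‖ ^ 2 : ℝ) : ℂ)
        = ∑ k, ∑ l, ((lam k * lam l : ℝ) : ℂ) *
            (∑ i, ∑ j, ((‖A i j‖ ^ 2 : ℝ) : ℂ) *
              ((U i k * cj (U i l)) * cj (U j k * cj (U j l)))) := by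
      have lhs_eq : ((∑ i, ∑ j, ‖A i j‖ ^ 2 * ‖B i j‖ ^ 2 : ℝ) : ℂ)
          = ∑ i, ∑ j, ((‖A i j‖ ^ 2 : ℝ) : ℂ) *
              ((∑ k, ((lam k : ℝ) : ℂ) * (U i k * cj (U j k))) *
                cj (∑ l, ((lam l : ℝ) : ℂ) * (U i l * cj (U j l)))) := by
        push_cast
        refine Finset.sum_congr rfl fun i _ => Finset.sum_congr rfl fun j _ => ?_
        rw [← entry_formula hB.1 i j, mul_conj']
      rw [lhs_eq, master (fun i j => ((‖A i j‖ ^ 2 : ℝ) : ℂ))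
        (fun k i j => ((lam k : ℝ) : ℂ) * (U i k * cj (U j k)))]
      refine Finset.sum_congr rfl fun k _ => Finset.sum_congr rfl fun l _ => ?_
      rw [Finset.mul_sum]
      refine Finset.sum_congr rfl fun i _ => ?_
      rw [Finset.mul_sum]
      refine Finset.sum_congr rfl fun j _ => ?_
      simp only [_root_.map_mul, RingHomCompTriple.comp_apply, conj_conj,
        Complex.conj_ofReal, RingHom.id_apply]
      push_cast
      ring
    have := congrArg Complex.re hcplx
    rw [Complex.ofReal_re] at this
    rw [this, Complex.re_sum]
    refine Finset.sum_congr rfl fun k _ => ?_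
    rw [Complex.re_sum]
    refine Finset.sum_congr rfl fun l _ => ?_
    rw [hQ]
    simp [Complex.mul_re]
  have sum_lam_sq : ∑ k, lam k ^ 2 = 1 := by
    rw [hlamdef, ← frobSq hB.1, hfB]
  calc m = m * ∑ k, lam k ^ 2 := by rw [sum_lam_sq, mul_one]
    _ = ∑ k, lam k ^ 2 * m := by rw [Finset.mul_sum]; exact Finset.sum_congr rfl fun _ _ => mul_comm _ _
    _ ≤ ∑ k, (lam k * lam k) * Q k k := by
        refine Finset.sum_le_sum fun k _ => ?_
        rw [sq]
        exact mul_le_mul_of_nonneg_left (hQdiag k) (mul_nonneg (hlam k) (hlam k))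
    _ ≤ ∑ k, ∑ l, (lam k * lam l) * Q k l := by
        refine Finset.sum_le_sum fun k _ => ?_
        exact Finset.single_le_sum (f := fun l => (lam k * lam l) * Q k l)
          (fun l _ => mul_nonneg (mul_nonneg (hlam k) (hlam l)) (hQpos k l)) (Finset.mem_univ k)
    _ = ∑ i, ∑ j, ‖A i j‖ ^ 2 * ‖B i j‖ ^ 2 := expand.symm

-- outer product facts
theorem outer_posSemidef (x : Fin n → ℂ) : (vecMulVec x (star x)).PosSemidef := by
  rw [vecMulVec_eq (Fin 1), ← Matrix.conjTranspose_replicateCol]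
  exact posSemidef_self_mul_conjTranspose _

theorem outer_entry_norm (x : Fin n → ℂ) (i j : Fin n) :
    ‖vecMulVec x (star x) i j‖ ^ 2 = ‖x i‖ ^ 2 * ‖x j‖ ^ 2 := by
  simp [vecMulVec_apply, norm_mul, mul_pow]

theorem hadamard_norm_sq (A B : Matrix (Fin n) (Fin n) ℂ) :
    frobNorm (A.hadamard B) = Real.sqrt (∑ i, ∑ j, ‖A i j‖ ^ 2 * ‖B i j‖ ^ 2) := by
  unfold frobNorm
  congr 1
  exact Finset.sum_congr rfl fun i _ => Finset.sum_congr rfl fun j _ => by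
    simp [Matrix.hadamard_apply, norm_mul, mul_pow]

theorem outer_frobNorm (x : Fin n → ℂ) (hx : ∑ i, ‖x i‖ ^ 2 = 1) :
    frobNorm (vecMulVec x (star x)) = 1 := by
  unfold frobNorm
  have : ∑ i, ∑ j, ‖vecMulVec x (star x) i j‖ ^ 2 = 1 := by
    calc ∑ i, ∑ j, ‖vecMulVec x (star x) i j‖ ^ 2
        = ∑ i, ∑ j, ‖x i‖ ^ 2 * ‖x j‖ ^ 2 :=
          Finset.sum_congr rfl fun i _ => Finset.sum_congr rfl fun j _ => outer_entry_norm x i j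
      _ = (∑ i, ‖x i‖ ^ 2) * (∑ j, ‖x j‖ ^ 2) := (Finset.sum_mul_sum _ _ _ _).symm
      _ = 1 := by rw [hx, one_mul]
  rw [this, Real.sqrt_one]

-- compactness
theorem exists_min (hn : 0 < n) (A : Matrix (Fin n) (Fin n) ℂ) :
    ∃ x₀ : Fin n → ℂ, (∑ i, ‖x₀ i‖ ^ 2) = 1 ∧
      ∀ u : Fin n → ℂ, (∑ i, ‖u i‖ ^ 2) = 1 →
        (∑ i, ∑ j, ‖A i j‖ ^ 2 * (‖x₀ i‖ ^ 2 * ‖x₀ j‖ ^ 2))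
          ≤ ∑ i, ∑ j, ‖A i j‖ ^ 2 * (‖u i‖ ^ 2 * ‖u j‖ ^ 2) := by
  set T : Set (Fin n → ℂ) := {x | ∑ i, ‖x i‖ ^ 2 = 1} with hT
  have hcont : Continuous fun x : Fin n → ℂ => ∑ i, ‖x i‖ ^ 2 := by fun_prop
  have hclosed : IsClosed T := isClosed_eq hcont continuous_const
  have hbdd : Bornology.IsBounded T := by
    refine (Metric.isBounded_closedBall (x := (0 : Fin n → ℂ)) (r := 1)).subset ?_
    intro x hx
    rw [Metric.mem_closedBall, dist_zero_right]
    refine (pi_norm_le_iff_of_nonneg zero_le_one).2 fun i => ?_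
    have h1 : ‖x i‖ ^ 2 ≤ 1 := hx ▸ Finset.single_le_sum
      (f := fun i => ‖x i‖ ^ 2) (fun i _ => sq_nonneg _) (Finset.mem_univ i)
    nlinarith [norm_nonneg (x i)]
  have hcpt : IsCompact T := Metric.isCompact_of_isClosed_isBounded hclosed hbdd
  have hne : T.Nonempty := by
    refine ⟨Pi.single ⟨0, hn⟩ 1, ?_⟩
    simp only [hT, Set.mem_setOf_eq]
    rw [Finset.sum_eq_single ⟨0, hn⟩]
    · simp
    · intro i _ hi
      simp [Pi.single_apply, hi]
    · simp
  have hgcont : Continuous fun x : Fin n → ℂ =>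
      ∑ i, ∑ j, ‖A i j‖ ^ 2 * (‖x i‖ ^ 2 * ‖x j‖ ^ 2) := by fun_prop
  obtain ⟨x₀, hx₀T, hmin⟩ := hcpt.exists_isMinOn hne hgcont.continuousOn
  exact ⟨x₀, hx₀T, fun u hu => hmin hu⟩

theorem frobIdx_attained_rank_one' (hn : 0 < n) (A : Matrix (Fin n) (Fin n) ℂ)
    (hA : A.PosSemidef) :
    ∃ x : Fin n → ℂ, (∑ i, ‖x i‖ ^ 2) = 1 ∧
      frobIdx A = frobNorm (A.hadamard (Matrix.vecMulVec x (star x))) := by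
  obtain ⟨x₀, hx₀, hmin⟩ := exists_min hn A
  refine ⟨x₀, hx₀, ?_⟩
  have hmem : frobNorm (A.hadamard (vecMulVec x₀ (star x₀))) ∈
      {r : ℝ | ∃ B : Matrix (Fin n) (Fin n) ℂ,
        B.PosSemidef ∧ frobNorm B = 1 ∧ r = frobNorm (A.hadamard B)} :=
    ⟨_, outer_posSemidef x₀, outer_frobNorm x₀ hx₀, rfl⟩
  have hbdd : BddBelow {r : ℝ | ∃ B : Matrix (Fin n) (Fin n) ℂ,
      B.PosSemidef ∧ frobNorm B = 1 ∧ r = frobNorm (A.hadamard B)} := by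
    refine ⟨0, ?_⟩
    rintro r ⟨B, -, -, rfl⟩
    exact Real.sqrt_nonneg _
  refine le_antisymm (csInf_le hbdd hmem) (le_csInf ⟨_, hmem⟩ ?_)
  rintro r ⟨B, hBpsd, hBfrob, rfl⟩
  rw [hadamard_norm_sq, hadamard_norm_sq]
  apply Real.sqrt_le_sqrt
  have hone : ∑ i, ∑ j, ‖B i j‖ ^ 2 = 1 := by
    unfold frobNorm at hBfrob
    have hnn : 0 ≤ ∑ i, ∑ j, ‖B i j‖ ^ 2 :=
      Finset.sum_nonneg fun i _ => Finset.sum_nonneg fun j _ => sq_nonneg _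
    nlinarith [Real.sq_sqrt hnn]
  have key := main_ineq hA hBpsd hone
    (∑ i, ∑ j, ‖A i j‖ ^ 2 * (‖x₀ i‖ ^ 2 * ‖x₀ j‖ ^ 2)) hmin
  calc ∑ i, ∑ j, ‖A i j‖ ^ 2 * ‖vecMulVec x₀ (star x₀) i j‖ ^ 2
      = ∑ i, ∑ j, ‖A i j‖ ^ 2 * (‖x₀ i‖ ^ 2 * ‖x₀ j‖ ^ 2) :=
        Finset.sum_congr rfl fun i _ => Finset.sum_congr rfl fun j _ => by
          rw [outer_entry_norm]
    _ ≤ ∑ i, ∑ j, ‖A i j‖ ^ 2 * ‖B i j‖ ^ 2 := key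

end Aux

/-- `I(2, A)` is attained at a rank-one projection. -/
theorem frobIdx_attained_rank_one {n : ℕ} (hn : 0 < n) (A : Matrix (Fin n) (Fin n) ℂ)
    (hA : A.PosSemidef) :
    ∃ x : Fin n → ℂ, (∑ i, ‖x i‖ ^ 2) = 1 ∧
      frobIdx A = frobNorm (A.hadamard (Matrix.vecMulVec x (star x))) := by
  exact frobIdx_attained_rank_one' hn A hA
end

section
/- Let A be positive semidefinite in M_n(ℂ) and B = Σ_{i=1}^k B_i where the B_i are positive semidefinite with pairwise products B_iB_j = 0 for i ≠ j. Then Σ_{i=1}^k ‖A ∘ B_i‖_2² ≤ ‖A ∘ B‖_2², where ‖·‖_2 is the Frobenius norm. -/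
open Matrix ComplexOrder

/-- Schur product theorem. -/
lemma schur_psd {m : ℕ} {M N : Matrix (Fin m) (Fin m) ℂ}
    (hM : M.PosSemidef) (hN : N.PosSemidef) : (M.hadamard N).PosSemidef := by
  obtain ⟨W, hW⟩ : ∃ W : Matrix (Fin m) (Fin m) ℂ, N = Wᴴ * W := by
    open scoped MatrixOrder in
    obtain ⟨W, hW⟩ := CStarAlgebra.nonneg_iff_eq_star_mul_self.mp hN.nonneg
    exact ⟨W, hW⟩
  refine PosSemidef.of_dotProduct_mulVec_nonneg ?_ ?_
  · ext p q
    simp only [conjTranspose_apply, hadamard_apply, star_mul']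
    rw [mul_comm, ← conjTranspose_apply, ← conjTranspose_apply, hM.1, hN.1]
    exact mul_comm _ _
  · intro x
    have key : star x ⬝ᵥ ((M.hadamard N) *ᵥ x)
        = ∑ r, star (fun p => W r p * x p) ⬝ᵥ (M *ᵥ (fun p => W r p * x p)) := by
      subst hW
      simp only [dotProduct, mulVec, hadamard_apply, mul_apply, conjTranspose_apply,
        Pi.star_apply, Finset.mul_sum, Finset.sum_mul, star_mul']
      refine (Finset.sum_congr rfl fun p _ => Finset.sum_comm).trans ?_
      rw [Finset.sum_comm]
      refine Finset.sum_congr rfl fun r _ => Finset.sum_congr rfl fun p _ =>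
        Finset.sum_congr rfl fun q _ => ?_
      ring
    rw [key]
    exact Finset.sum_nonneg fun r _ => hM.dotProduct_mulVec_nonneg _

lemma trace_re_nonneg {m : ℕ} {M N : Matrix (Fin m) (Fin m) ℂ}
    (hM : M.PosSemidef) (hN : N.PosSemidef) :
    0 ≤ (∑ p, ∑ q, M p q * N q p).re := by
  obtain ⟨X, hX⟩ : ∃ X : Matrix (Fin m) (Fin m) ℂ, M = Xᴴ * X := by
    open scoped MatrixOrder in
    obtain ⟨X, hX⟩ := CStarAlgebra.nonneg_iff_eq_star_mul_self.mp hM.nonneg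
    exact ⟨X, hX⟩
  have key : (∑ p, ∑ q, M p q * N q p)
      = ∑ r, star (fun q => X r q) ⬝ᵥ (Nᵀ *ᵥ (fun q => X r q)) := by
    subst hX
    simp only [dotProduct, mulVec, mul_apply, conjTranspose_apply, transpose_apply,
      Pi.star_apply, Finset.mul_sum, Finset.sum_mul]
    refine (Finset.sum_congr rfl fun p _ => Finset.sum_comm).trans ?_
    rw [Finset.sum_comm]
    refine Finset.sum_congr rfl fun r _ => Finset.sum_congr rfl fun p _ =>
      Finset.sum_congr rfl fun q _ => ?_
    ring
  have h : 0 ≤ ∑ p, ∑ q, M p q * N q p := key ▸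
    Finset.sum_nonneg fun r _ => (hN.transpose).dotProduct_mulVec_nonneg _
  exact (Complex.le_def.mp h).1

/-- If `B = ∑ B_i` with the `B_i` positive semidefinite and `B_i B_j = 0` for `i ≠ j`,
then `∑ ‖A ∘ B_i‖₂² ≤ ‖A ∘ B‖₂²`. -/
theorem sum_sq_frobNorm_hadamard_le {n k : ℕ} (A : Matrix (Fin n) (Fin n) ℂ)
    (hA : A.PosSemidef) (B : Fin k → Matrix (Fin n) (Fin n) ℂ)
    (hB : ∀ i, (B i).PosSemidef) (horth : ∀ i j, i ≠ j → B i * B j = 0) :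
    (∑ i, frobNorm (A.hadamard (B i)) ^ 2) ≤ frobNorm (A.hadamard (∑ i, B i)) ^ 2 := by
  have hsq : ∀ (X : Matrix (Fin n) (Fin n) ℂ),
      frobNorm X ^ 2 = ∑ p, ∑ q, ‖X p q‖ ^ 2 := fun X =>
    Real.sq_sqrt (Finset.sum_nonneg fun _ _ => Finset.sum_nonneg fun _ _ => sq_nonneg _)
  simp only [hsq]
  have hnorm : ∀ z : ℂ, ‖z‖ ^ 2 = (star z * z).re := fun z => by
    rw [mul_comm]
    simp [Complex.mul_conj, Complex.sq_norm, ← Complex.ofReal_pow, Complex.ofReal_re]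
  set C : Matrix (Fin n) (Fin n) ℂ := Aᵀ.hadamard A with hC
  have hCpsd : C.PosSemidef := schur_psd hA.transpose hA
  have hAs : ∀ p q, star (A p q) = A q p := fun p q => by
    conv_rhs => rw [← hA.1]
    rfl
  have hBs : ∀ i p q, star (B i p q) = B i q p := fun i p q => by
    conv_rhs => rw [← (hB i).1]
    rfl
  set g : Fin k → Fin k → ℝ :=
    fun i j => ∑ p, ∑ q, ((C.hadamard (B j)) p q * (B i) q p).re with hg
  have hgnonneg : ∀ i j, 0 ≤ g i j := by
    intro i j
    have := trace_re_nonneg (schur_psd hCpsd (hB j)) (hB i)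
    rw [Complex.re_sum] at this
    simp only [Complex.re_sum] at this
    exact this
  have key : ∀ (i j : Fin k) (p q : Fin n),
      star ((A.hadamard (B i)) p q) * (A.hadamard (B j)) p q
        = (C.hadamard (B j)) p q * (B i) q p := by
    intro i j p q
    simp only [hadamard_apply, hC, star_mul', transpose_apply, hAs, hBs]
    ring
  have hdiag : ∀ i, (∑ p, ∑ q, ‖(A.hadamard (B i)) p q‖ ^ 2) = g i i := by
    intro i
    refine Finset.sum_congr rfl fun p _ => Finset.sum_congr rfl fun q _ => ?_
    rw [hnorm, key i i p q]
  have hRHS : (∑ p, ∑ q, ‖(A.hadamard (∑ i, B i)) p q‖ ^ 2) = ∑ i, ∑ j, g i j := by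
    have hpt : ∀ p q, ‖(A.hadamard (∑ i, B i)) p q‖ ^ 2
        = ∑ i, ∑ j, ((C.hadamard (B j)) p q * (B i) q p).re := by
      intro p q
      rw [hnorm]
      have h1 : (A.hadamard (∑ i, B i)) p q = ∑ j, (A.hadamard (B j)) p q := by
        simp [hadamard_apply, Matrix.sum_apply, Finset.mul_sum]
      rw [h1, star_sum, Finset.sum_mul]
      rw [Complex.re_sum]
      refine Finset.sum_congr rfl fun i _ => ?_
      rw [Finset.mul_sum, Complex.re_sum]
      exact Finset.sum_congr rfl fun j _ => congrArg Complex.re (key i j p q)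
    simp only [hpt]
    refine (Finset.sum_congr rfl fun p _ => Finset.sum_comm).trans ?_
    rw [Finset.sum_comm]
    refine Finset.sum_congr rfl fun i _ => ?_
    refine (Finset.sum_congr rfl fun p _ => Finset.sum_comm).trans ?_
    rw [Finset.sum_comm]
  rw [hRHS]
  calc (∑ i, ∑ p, ∑ q, ‖(A.hadamard (B i)) p q‖ ^ 2) = ∑ i, g i i :=
        Finset.sum_congr rfl fun i _ => hdiag i
    _ ≤ ∑ i, ∑ j, g i j := Finset.sum_le_sum fun i _ =>
        Finset.single_le_sum (fun j _ => hgnonneg i j) (Finset.mem_univ i)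
end

section
/- Let 0 < λ ≠ μ and Λ_0 be the 2×2 matrix with entries Λ_0 = [[λ²+λ^{-2}, λμ+(λμ)^{-1}],[λμ+(λμ)^{-1}, μ²+μ^{-2}]]. Then Λ_0 is positive definite and I(Λ_0) = (λ+μ)²/(1+λ²μ²). -/
open Matrix ComplexOrder

private lemma herm2 (a b c : ℝ) : (!![(a:ℂ), b; b, c]).IsHermitian := by
  ext i j
  fin_cases i <;> fin_cases j <;> simp [Matrix.conjTranspose_apply]

private lemma quad2 (a b c : ℝ) (x : Fin 2 → ℂ) :
    dotProduct (star x) ((!![(a:ℂ), b; b, c]) *ᵥ x) =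
      ((a * ((x 0).re^2 + (x 0).im^2) + 2*b*((x 0).re*(x 1).re + (x 0).im*(x 1).im)
        + c * ((x 1).re^2 + (x 1).im^2) : ℝ) : ℂ) := by
  simp [dotProduct, mulVec, Fin.sum_univ_two]
  apply Complex.ext <;>
    simp [Complex.add_re, Complex.add_im, Complex.mul_re, Complex.mul_im,
      ← Complex.ofReal_pow] <;> ring

private lemma psd2 {a b c : ℝ} :
    (!![(a:ℂ), b; b, c]).PosSemidef ↔ 0 ≤ a ∧ 0 ≤ c ∧ b^2 ≤ a*c := by
  constructor
  · rw [Matrix.posSemidef_iff_dotProduct_mulVec]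
    rintro ⟨-, h⟩
    have key : ∀ u s : ℝ, 0 ≤ a*u^2 + 2*b*(u*s) + c*s^2 := by
      intro u s
      have h2 := h ![(u:ℂ), s]
      rw [quad2] at h2
      rw [Complex.zero_le_real] at h2
      simpa using h2
    have ha : 0 ≤ a := by have := key 1 0; nlinarith
    have hc : 0 ≤ c := by have := key 0 1; nlinarith
    refine ⟨ha, hc, ?_⟩
    rcases eq_or_lt_of_le ha with ha0 | ha0
    · have h4 := key (-b*(c+1)) (2*b^2)
      rw [← ha0] at h4
      have hb4 : b^4 = 0 := le_antisymm (by nlinarith) (by positivity)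
      have hb0 : b = 0 := by
        have := pow_eq_zero_iff (n := 4) (by norm_num) |>.1 hb4
        exact this
      rw [hb0, ← ha0]
      norm_num
    · have h4 := key b (-a)
      nlinarith
  · rintro ⟨ha, hc, hb⟩
    refine Matrix.posSemidef_iff_dotProduct_mulVec.mpr ⟨herm2 a b c, fun x => ?_⟩
    rw [quad2, Complex.zero_le_real]
    set u := (x 0).re; set v := (x 0).im; set s := (x 1).re; set t := (x 1).im
    rcases eq_or_lt_of_le ha with ha0 | ha0
    · have hb2 : b ^ 2 = 0 := le_antisymm (by nlinarith) (sq_nonneg b)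
      have hb0 : b = 0 := by
        have := pow_eq_zero_iff (n := 2) (two_ne_zero) |>.1 hb2
        exact this
      rw [hb0]
      nlinarith [sq_nonneg s, sq_nonneg t, sq_nonneg u, sq_nonneg v,
        mul_nonneg hc (add_nonneg (sq_nonneg s) (sq_nonneg t)),
        mul_nonneg ha (add_nonneg (sq_nonneg u) (sq_nonneg v))]
    · nlinarith [sq_nonneg (a*u + b*s), sq_nonneg (a*v + b*t),
        mul_nonneg (sub_nonneg.2 hb) (add_nonneg (sq_nonneg s) (sq_nonneg t)), ha0]

private lemma pd2 {a b c : ℝ} (ha : 0 < a) (hd : b^2 < a*c) :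
    (!![(a:ℂ), b; b, c]).PosDef := by
  have hc : 0 < c := by nlinarith [sq_nonneg b]
  refine Matrix.posDef_iff_dotProduct_mulVec.mpr ⟨herm2 a b c, fun x hx => ?_⟩
  rw [quad2]
  rw [Complex.zero_lt_real]
  set u := (x 0).re; set v := (x 0).im; set s := (x 1).re; set t := (x 1).im
  have hP : 0 < u^2 + v^2 + s^2 + t^2 := by
    have h01 : x 0 ≠ 0 ∨ x 1 ≠ 0 := by
      by_contra h
      push_neg at h
      exact hx (funext fun i => by fin_cases i <;> simp [h.1, h.2])
    rcases h01 with h0 | h0 <;>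
    · have := Complex.normSq_pos.2 h0
      rw [Complex.normSq_apply] at this
      nlinarith [sq_nonneg u, sq_nonneg v, sq_nonneg s, sq_nonneg t]
  nlinarith [sq_nonneg (a*u + b*s), sq_nonneg (a*v + b*t), sq_nonneg (b*u + c*s),
    sq_nonneg (b*v + c*t), mul_pos (sub_pos.2 hd) hP, ha, hc]

private lemma sub_smul_eq (a b c t : ℝ) :
    !![(a:ℂ), b; b, c] - (t:ℂ) • (Matrix.of fun _ _ => (1:ℂ)) =
      !![((a-t : ℝ):ℂ), ((b-t : ℝ):ℂ); ((b-t : ℝ):ℂ), ((c-t : ℝ):ℂ)] := by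
  ext i j
  fin_cases i <;> fin_cases j <;>
    simp [Matrix.sub_apply, Matrix.smul_apply]

theorem minIdx_lambda0 (l m : ℝ) (hl : 0 < l) (hm : 0 < m) (hlm : l ≠ m) :
    (!![((l : ℂ))^2 + ((l : ℂ))⁻¹^2, (l : ℂ) * m + ((l : ℂ) * m)⁻¹;
       (l : ℂ) * m + ((l : ℂ) * m)⁻¹, ((m : ℂ))^2 + ((m : ℂ))⁻¹^2]).PosDef ∧
    minIdx !![((l : ℂ))^2 + ((l : ℂ))⁻¹^2, (l : ℂ) * m + ((l : ℂ) * m)⁻¹;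
       (l : ℂ) * m + ((l : ℂ) * m)⁻¹, ((m : ℂ))^2 + ((m : ℂ))⁻¹^2] =
      (l + m) ^ 2 / (1 + l ^ 2 * m ^ 2) := by
  have hl0 : l ≠ 0 := hl.ne'
  have hm0 : m ≠ 0 := hm.ne'
  have hlm2 : l^2 - m^2 ≠ 0 := by
    intro h
    exact hlm (by nlinarith)
  set A : ℝ := l^2 + (l⁻¹)^2 with hA
  set B : ℝ := l*m + (l*m)⁻¹ with hB
  set C : ℝ := m^2 + (m⁻¹)^2 with hC
  set T : ℝ := (l + m) ^ 2 / (1 + l ^ 2 * m ^ 2) with hT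
  have hM : (!![((l : ℂ))^2 + ((l : ℂ))⁻¹^2, (l : ℂ) * m + ((l : ℂ) * m)⁻¹;
       (l : ℂ) * m + ((l : ℂ) * m)⁻¹, ((m : ℂ))^2 + ((m : ℂ))⁻¹^2])
      = !![(A:ℂ), B; B, C] := by
    rw [hA, hB, hC]
    ext i j
    fin_cases i <;> fin_cases j <;> simp <;> (try push_cast) <;> (try ring)
  have hD : (0:ℝ) < 1 + l^2*m^2 := by positivity
  have hdetpos : 0 < A*C - B^2 := by
    have h1 : A*C - B^2 = (l^2 - m^2)^2/(l*m)^2 := by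
      rw [hA, hB, hC]; field_simp; ring
    rw [h1]; positivity
  have hApos : 0 < A := by rw [hA]; positivity
  have hAt : A - T = (l⁻¹ - l^2*m)^2 / (1 + l^2*m^2) := by
    rw [hA, hT]; field_simp; ring
  have hCt : C - T = (m⁻¹ - m^2*l)^2 / (1 + l^2*m^2) := by
    rw [hC, hT]; field_simp; ring
  have hSum : 0 < A + C - 2*B := by
    have h1 : A + C - 2*B = (l-m)^2*(1 + l^2*m^2)/(l*m)^2 := by
      rw [hA, hB, hC]; field_simp; ring
    rw [h1]
    have : l - m ≠ 0 := sub_ne_zero.2 hlm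
    positivity
  have hAC : A*C - B^2 = T * (A + C - 2*B) := by
    rw [hA, hB, hC, hT]; field_simp; ring
  refine ⟨by rw [hM]; exact pd2 hApos (by linarith), ?_⟩
  rw [hM]
  unfold minIdx
  have hTnn : 0 ≤ T := by rw [hT]; positivity
  have mem : T ∈ {t : ℝ | 0 ≤ t ∧
      (!![(A:ℂ), B; B, C] - (t : ℂ) • (Matrix.of fun _ _ => (1 : ℂ))).PosSemidef} := by
    refine ⟨hTnn, ?_⟩
    rw [sub_smul_eq, psd2]
    refine ⟨by rw [hAt]; positivity, by rw [hCt]; positivity, ?_⟩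
    nlinarith [hAC]
  have ub : ∀ r ∈ {t : ℝ | 0 ≤ t ∧
      (!![(A:ℂ), B; B, C] - (t : ℂ) • (Matrix.of fun _ _ => (1 : ℂ))).PosSemidef}, r ≤ T := by
    rintro r ⟨-, hpsd⟩
    rw [sub_smul_eq, psd2] at hpsd
    obtain ⟨-, -, h3⟩ := hpsd
    nlinarith [hSum, hAC, h3]
  exact le_antisymm (csSup_le ⟨T, mem⟩ ub) (le_csSup ⟨T, ub⟩ mem)
end

section
/- Let A be a positive semidefinite n×n matrix of rank one. Then for every unitarily invariant norm N on M_n(ℂ) normalized so that N(E_{11}) = 1, the N-Hadamard index satisfies I(N, A) = min_{1≤i≤n} A_{ii}. -/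
open Matrix ComplexOrder

lemma diag_unitary_aux {n : ℕ} (u : Fin n → ℂ) (hu : ∀ i, ‖u i‖ = 1) :
    Matrix.diagonal u ∈ Matrix.unitaryGroup (Fin n) ℂ := by
  rw [Matrix.mem_unitaryGroup_iff, Matrix.star_eq_conjTranspose, Matrix.diagonal_conjTranspose,
    Matrix.diagonal_mul_diagonal]
  have h : (fun i => u i * (star u) i) = fun _ => (1 : ℂ) := by
    funext i
    have : u i * (starRingEnd ℂ) (u i) = (Complex.normSq (u i) : ℂ) := Complex.mul_conj (u i)
    rw [Pi.star_apply]
    rw [show (star (u i)) = (starRingEnd ℂ) (u i) from rfl, this, Complex.normSq_eq_norm_sq]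
    rw [hu i]
    norm_num
  rw [h, Matrix.diagonal_one]

lemma rank_one_decomp {n : ℕ} (A : Matrix (Fin n) (Fin n) ℂ) (hA : A.PosSemidef)
    (hrk : A.rank = 1) : ∃ v : Fin n → ℂ, ∀ i k, A i k = v i * (starRingEnd ℂ) (v k) := by
  have hH := hA.1
  have hcard : Fintype.card {i // hH.eigenvalues i ≠ 0} = 1 := by
    rw [← hH.rank_eq_card_non_zero_eigs, hrk]
  obtain ⟨⟨j, hj⟩, hjj⟩ := Fintype.card_eq_one_iff.mp hcard
  set lam := hH.eigenvalues j with hlamdef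
  have hlam0 : 0 ≤ lam := hA.eigenvalues_nonneg j
  have hzero : ∀ l, l ≠ j → hH.eigenvalues l = 0 := by
    intro l hl
    by_contra h
    exact hl (congrArg Subtype.val (hjj ⟨l, h⟩))
  set U : Matrix (Fin n) (Fin n) ℂ := (hH.eigenvectorUnitary : Matrix (Fin n) (Fin n) ℂ) with hU
  refine ⟨fun i => (Real.sqrt lam : ℂ) * U i j, fun i k => ?_⟩
  have hspec := hH.spectral_theorem
  have h1 : A i k = ∑ l, U i l * ((hH.eigenvalues l : ℝ) : ℂ) * (starRingEnd ℂ) (U k l) := by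
    conv_lhs => rw [hspec, Unitary.conjStarAlgAut_apply]
    rw [Matrix.mul_apply]
    refine Finset.sum_congr rfl fun l _ => ?_
    rw [Matrix.mul_diagonal, Matrix.star_apply]
    rfl
  have hs : ((Real.sqrt lam : ℂ)) * (Real.sqrt lam : ℂ) = (lam : ℂ) := by
    rw [← Complex.ofReal_mul, Real.mul_self_sqrt hlam0]
  rw [h1, Finset.sum_eq_single j]
  · rw [_root_.map_mul, Complex.conj_ofReal, ← hlamdef]
    linear_combination (-(U i j * (starRingEnd ℂ) (U k j))) * hs
  · intro l _ hl
    rw [hzero l hl]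
    simp
  · simp

lemma contraction_aux {n : ℕ} (N : Matrix (Fin n) (Fin n) ℂ → ℝ)
    (htri : ∀ B C, N (B + C) ≤ N B + N C)
    (hhom : ∀ (z : ℂ) B, N (z • B) = ‖z‖ * N B)
    (huinv : ∀ U V B, U ∈ Matrix.unitaryGroup (Fin n) ℂ →
      V ∈ Matrix.unitaryGroup (Fin n) ℂ → N (U * B * V) = N B)
    (p : Fin n → ℝ) (hp0 : ∀ i, 0 ≤ p i) (hp1 : ∀ i, p i ≤ 1)
    (X : Matrix (Fin n) (Fin n) ℂ) :
    N (Matrix.diagonal (fun i => (p i : ℂ)) * X * Matrix.diagonal (fun i => (p i : ℂ))) ≤ N X := by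
  set u : Fin n → ℂ := fun i => (p i : ℂ) + (Real.sqrt (1 - (p i)^2) : ℂ) * Complex.I with hu
  have hsq : ∀ i, (1 - (p i)^2) ≥ 0 := fun i => by nlinarith [hp0 i, hp1 i]
  have hnorm : ∀ i, ‖u i‖ = 1 := by
    intro i
    have h1 : Complex.normSq (u i) = 1 := by
      rw [hu]
      simp only [Complex.normSq_add_mul_I]
      rw [Real.sq_sqrt (hsq i)]
      ring
    have : ‖u i‖ = Real.sqrt (Complex.normSq (u i)) := by
      rw [Complex.norm_def]
    rw [this, h1, Real.sqrt_one]
  set U : Matrix (Fin n) (Fin n) ℂ := Matrix.diagonal u with hUdef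
  have hU : U ∈ Matrix.unitaryGroup (Fin n) ℂ := diag_unitary_aux u hnorm
  have hUs : star U ∈ Matrix.unitaryGroup (Fin n) ℂ := Unitary.star_mem hU
  have hsplit : Matrix.diagonal (fun i => (p i : ℂ)) = ((1:ℂ)/2) • (U + star U) := by
    ext i k
    rw [hUdef, Matrix.star_eq_conjTranspose, Matrix.diagonal_conjTranspose]
    rw [Matrix.smul_apply, Matrix.add_apply]
    by_cases h : i = k
    · subst h
      rw [Matrix.diagonal_apply_eq, Matrix.diagonal_apply_eq, Matrix.diagonal_apply_eq]
      have hre : (u i).re = p i := by simp [hu]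
      rw [Pi.star_apply, show star (u i) = (starRingEnd ℂ) (u i) from rfl,
        Complex.add_conj, hre, smul_eq_mul]
      push_cast
      ring
    · rw [Matrix.diagonal_apply_ne _ h, Matrix.diagonal_apply_ne _ h, Matrix.diagonal_apply_ne _ h]
      simp
  have key : Matrix.diagonal (fun i => (p i : ℂ)) * X * Matrix.diagonal (fun i => (p i : ℂ))
      = ((1:ℂ)/4) • (U * X * U + U * X * star U + star U * X * U + star U * X * star U) := by
    rw [hsplit]
    simp only [smul_mul_assoc, mul_smul_comm, smul_smul]
    rw [show ((1:ℂ)/2 * (1/2)) = 1/4 by norm_num]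
    congr 1
    noncomm_ring
  rw [key, hhom]
  have hterm : ∀ (V W : Matrix (Fin n) (Fin n) ℂ), V ∈ Matrix.unitaryGroup (Fin n) ℂ →
      W ∈ Matrix.unitaryGroup (Fin n) ℂ → N (V * X * W) = N X := fun V W hV hW => huinv V W X hV hW
  calc ‖(1:ℂ)/4‖ * N (U * X * U + U * X * star U + star U * X * U + star U * X * star U)
      ≤ ‖(1:ℂ)/4‖ * (N (U * X * U) + N (U * X * star U) + N (star U * X * U) + N (star U * X * star U)) := by
        apply mul_le_mul_of_nonneg_left _ (norm_nonneg _)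
        calc N (U * X * U + U * X * star U + star U * X * U + star U * X * star U)
            ≤ N (U * X * U + U * X * star U + star U * X * U) + N (star U * X * star U) := htri _ _
          _ ≤ N (U * X * U + U * X * star U) + N (star U * X * U) + N (star U * X * star U) := by
              have := htri (U * X * U + U * X * star U) (star U * X * U); linarith
          _ ≤ N (U * X * U) + N (U * X * star U) + N (star U * X * U) + N (star U * X * star U) := by
              have := htri (U * X * U) (U * X * star U); linarith
    _ = N X := by
        rw [hterm U U hU hU, hterm U (star U) hU hUs, hterm (star U) U hUs hU,
          hterm (star U) (star U) hUs hUs]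
        have h4 : ‖(1:ℂ)/4‖ = 1/4 := by norm_num
        rw [h4]; ring


/-- For a rank-one positive semidefinite matrix `A` and any unitarily invariant
norm `N` normalized so that `N(E₁₁) = 1`, the `N`-Hadamard index
`I(N, A) = min{N(A ∘ B) : B ⪰ 0, N(B) = 1}` equals `min_i A_ii`. -/
theorem hadamard_index_rank_one {n : ℕ} (hn : 0 < n)
    (A : Matrix (Fin n) (Fin n) ℂ) (hA : A.PosSemidef) (hrk : A.rank = 1)
    (N : Matrix (Fin n) (Fin n) ℂ → ℝ)
    (htri : ∀ B C, N (B + C) ≤ N B + N C)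
    (hhom : ∀ (z : ℂ) B, N (z • B) = ‖z‖ * N B)
    (hdef : ∀ B, N B = 0 → B = 0)
    (huinv : ∀ U V B, U ∈ Matrix.unitaryGroup (Fin n) ℂ →
      V ∈ Matrix.unitaryGroup (Fin n) ℂ → N (U * B * V) = N B)
    (hnorm1 : ∀ i, N (Matrix.single i i (1 : ℂ)) = 1) :
    sInf {r : ℝ | ∃ B : Matrix (Fin n) (Fin n) ℂ,
        B.PosSemidef ∧ N B = 1 ∧ r = N (A.hadamard B)} =
      ⨅ i, (A i i).re := by
  haveI : Nonempty (Fin n) := ⟨⟨0, hn⟩⟩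
  obtain ⟨v, hv⟩ := rank_one_decomp A hA hrk
  have hAii : ∀ i, (A i i).re = ‖v i‖^2 := fun i => by
    rw [hv i i, Complex.mul_conj, Complex.ofReal_re, Complex.normSq_eq_norm_sq]
  have hAiiC : ∀ i, A i i = ((‖v i‖^2 : ℝ) : ℂ) := fun i => by
    rw [hv i i, Complex.mul_conj, Complex.normSq_eq_norm_sq]
  -- N is nonnegative
  have hN0 : N 0 = 0 := by
    have := hhom 0 0
    simpa using this
  have hNnonneg : ∀ M, 0 ≤ N M := by
    intro M
    have h1 : N (M + (-M)) ≤ N M + N (-M) := htri _ _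
    have h2 : N (-M) = N M := by
      have := hhom (-1) M
      simpa using this
    have h3 : M + (-M) = 0 := by abel
    rw [h3, hN0, h2] at h1
    linarith
  -- minimizing index
  obtain ⟨i₀, hi₀⟩ := Finite.exists_min (fun i => (A i i).re)
  have hinf : ⨅ i, (A i i).re = (A i₀ i₀).re :=
    le_antisymm (ciInf_le (Set.finite_range _).bddBelow i₀) (le_ciInf hi₀)
  set S := {r : ℝ | ∃ B : Matrix (Fin n) (Fin n) ℂ,
      B.PosSemidef ∧ N B = 1 ∧ r = N (A.hadamard B)} with hS
  set m := (A i₀ i₀).re with hm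
  have hm0 : 0 ≤ m := by rw [hm, hAii]; positivity
  -- membership
  have hmem : m ∈ S := by
    refine ⟨Matrix.single i₀ i₀ 1, ?_, hnorm1 i₀, ?_⟩
    · have hEq : Matrix.single i₀ i₀ (1:ℂ) = Matrix.diagonal (Pi.single i₀ 1) := by
        ext a b
        simp only [Matrix.single, Matrix.diagonal_apply, Matrix.of_apply, Pi.single_apply]
        aesop
      rw [hEq]
      refine Matrix.posSemidef_diagonal_iff.mpr fun a => ?_
      rcases eq_or_ne a i₀ with h | h <;> simp [Pi.single_apply, h]
    · have hhad : A.hadamard (Matrix.single i₀ i₀ 1)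
          = (A i₀ i₀) • Matrix.single i₀ i₀ 1 := by
        ext a b
        simp only [Matrix.hadamard_apply, Matrix.smul_apply, Matrix.single,
          Matrix.of_apply, smul_eq_mul]
        by_cases h : i₀ = a ∧ i₀ = b
        · obtain ⟨h1, h2⟩ := h
          subst h1; subst h2; simp
        · simp [h]
      rw [hhad, hhom, hnorm1, mul_one, hAiiC, hm, hAii]
      rw [Complex.norm_real]
      rw [Real.norm_eq_abs, abs_of_nonneg (by positivity)]
  -- lower bound
  have hlb : ∀ r ∈ S, m ≤ r := by
    rintro r ⟨B, hBpsd, hNB, rfl⟩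
    rcases eq_or_lt_of_le hm0 with h0 | hmpos
    · rw [← h0]; exact hNnonneg _
    have hvne : ∀ i, ‖v i‖ ≠ 0 := by
      intro i
      have : m ≤ ‖v i‖^2 := by rw [← hAii]; exact hi₀ i
      intro hzero
      rw [hzero] at this
      nlinarith
    set e : Fin n → ℂ := fun i => v i / (‖v i‖ : ℂ) with he
    have hecnorm : ∀ i, ‖e i‖ = 1 := by
      intro i
      rw [he]
      simp only [norm_div, Complex.norm_real, Real.norm_eq_abs, abs_of_nonneg (norm_nonneg _)]
      exact div_self (hvne i)
    have heconj : ∀ i, ‖(starRingEnd ℂ) (e i)‖ = 1 := fun i => by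
      rw [RCLike.norm_conj]; exact hecnorm i
    set s : Fin n → ℂ := fun i => ((‖v i‖ : ℝ) : ℂ) with hs
    set X := Matrix.diagonal s * B * Matrix.diagonal s with hX
    -- step 1: N (A ∘ B) = N X
    have hAB : A.hadamard B = Matrix.diagonal e * X * Matrix.diagonal (fun i => (starRingEnd ℂ) (e i)) := by
      have h1 : Matrix.diagonal e * X * Matrix.diagonal (fun i => (starRingEnd ℂ) (e i))
          = Matrix.diagonal (fun i => e i * s i) * B *
            Matrix.diagonal (fun i => s i * (starRingEnd ℂ) (e i)) := by
        rw [hX, ← Matrix.diagonal_mul_diagonal, ← Matrix.diagonal_mul_diagonal]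
        noncomm_ring
      rw [h1]
      ext a b
      rw [Matrix.hadamard_apply, Matrix.mul_diagonal, Matrix.diagonal_mul, hv a b]
      have hes : e a * s a = v a := by
        rw [he, hs]; exact div_mul_cancel₀ _ (by simpa using hvne a)
      have hse : s b * (starRingEnd ℂ) (e b) = (starRingEnd ℂ) (v b) := by
        rw [he, hs, map_div₀, Complex.conj_ofReal]
        field_simp
        exact mul_div_cancel_left₀ _ (Complex.ofReal_ne_zero.mpr (by simpa using hvne b))
      rw [hes, hse]
      ring
    have hrX : N (A.hadamard B) = N X := by
      rw [hAB]
      exact huinv _ _ X (diag_unitary_aux e hecnorm) (diag_unitary_aux _ heconj)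
    -- step 2: m • B is a double contraction of X
    set p : Fin n → ℝ := fun i => Real.sqrt m / ‖v i‖ with hp
    have hp0 : ∀ i, 0 ≤ p i := fun i => by
      rw [hp]; positivity
    have hp1 : ∀ i, p i ≤ 1 := by
      intro i
      rw [hp]
      rw [div_le_one (lt_of_le_of_ne (norm_nonneg _) (Ne.symm (hvne i)))]
      have h1 : m ≤ ‖v i‖^2 := by rw [← hAii]; exact hi₀ i
      calc Real.sqrt m ≤ Real.sqrt (‖v i‖^2) := Real.sqrt_le_sqrt h1
        _ = ‖v i‖ := Real.sqrt_sq (norm_nonneg _)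
    have hPXP : Matrix.diagonal (fun i => (p i : ℂ)) * X * Matrix.diagonal (fun i => (p i : ℂ))
        = (m : ℂ) • B := by
      rw [hX, ← mul_assoc, ← mul_assoc, Matrix.diagonal_mul_diagonal, mul_assoc,
        Matrix.diagonal_mul_diagonal]
      have hps : (fun i => (p i : ℂ) * s i) = fun _ => ((Real.sqrt m : ℝ) : ℂ) := by
        funext i
        rw [hp, hs]
        push_cast
        rw [div_mul_cancel₀]
        simpa using hvne i
      have hsp : (fun i => s i * (p i : ℂ)) = fun _ => ((Real.sqrt m : ℝ) : ℂ) := by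
        rw [← hps]; funext i; ring
      have hconst : Matrix.diagonal (fun _ : Fin n => ((Real.sqrt m : ℝ) : ℂ))
          = ((Real.sqrt m : ℝ) : ℂ) • (1 : Matrix (Fin n) (Fin n) ℂ) := by
        ext i k
        rw [Matrix.smul_apply, Matrix.one_apply, Matrix.diagonal_apply]
        by_cases h : i = k <;> simp [h]
      rw [hps, hsp, hconst, Matrix.smul_mul, Matrix.smul_mul, Matrix.mul_smul, one_mul,
        mul_one, smul_smul, ← Complex.ofReal_mul, Real.mul_self_sqrt hm0]
    have hfinal : m ≤ N X := by
      have h1 : N (Matrix.diagonal (fun i => (p i : ℂ)) * X * Matrix.diagonal (fun i => (p i : ℂ))) ≤ N X :=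
        contraction_aux N htri hhom huinv p hp0 hp1 X
      rw [hPXP, hhom, hNB, mul_one] at h1
      rwa [Complex.norm_real, Real.norm_eq_abs, abs_of_nonneg hm0] at h1
    rw [hrX]
    exact hfinal
  rw [hinf]
  exact le_antisymm (csInf_le ⟨m, hlb⟩ hmem) (le_csInf ⟨m, hmem⟩ hlb)
end
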